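/- arXiv:2011.09406 — 9 statements merged into one kernel-verified Lean document; each statement's English description precedes it below -/
import Mathlib

section
/- Let G = (V, E) be a finite graph with edge weights p : E → ℝ≥0 such that the average fractional degree is at most 1/2 on every vertex-induced subgraph (equivalently, every nonempty subset U of vertices contains a vertex whose fractional degree within U is at most 1/2). Then there exists an orientation of the edges of G such that for every vertex v, the total weight of edges oriented into v is at most 1/2. -/
open scoped Classical in
lemma stmt_2_aux {V : Type*} [Fintype V] [DecidableEq V]
    (G : SimpleGraph V) [DecidableRel G.Adj]
    (p : Sym2 V → ℝ) (hp0 : ∀ e, 0 ≤ p e)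
    (h : ∀ U : Finset V, U.Nonempty → ∃ v ∈ U,
      ∑ e ∈ (G.edgeFinset.filter (fun e => ∀ x ∈ e, x ∈ U)).filter (fun e => v ∈ e), p e
        ≤ 1 / 2) :
    ∀ U : Finset V, ∃ head : Sym2 V → V,
      (∀ e ∈ G.edgeFinset.filter (fun e => ∀ x ∈ e, x ∈ U), head e ∈ e) ∧
      ∀ v ∈ U, ∑ e ∈ (G.edgeFinset.filter (fun e => ∀ x ∈ e, x ∈ U)).filter
          (fun e => head e = v), p e ≤ 1 / 2 := by
  intro U
  induction U using Finset.strongInduction with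
  | _ U ih =>
    rcases U.eq_empty_or_nonempty with rfl | hU
    · refine ⟨fun e => e.out.1, ?_, ?_⟩
      · intro e he
        simp only [Finset.mem_filter] at he
        exact absurd (he.2 e.out.1 (Sym2.out_fst_mem e)) (by simp)
      · intro v hv; simp at hv
    · obtain ⟨v, hvU, hv⟩ := h U hU
      obtain ⟨head', h1, h2⟩ := ih (U.erase v) (Finset.erase_ssubset hvU)
      have hmem : ∀ e ∈ G.edgeFinset, (∀ x ∈ e, x ∈ U) → v ∉ e →
          e ∈ G.edgeFinset.filter (fun e => ∀ x ∈ e, x ∈ U.erase v) := by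
        intro e heG heU hve
        simp only [Finset.mem_filter]
        exact ⟨heG, fun x hx => Finset.mem_erase.2 ⟨fun hxv => hve (hxv ▸ hx), heU x hx⟩⟩
      refine ⟨fun e => if v ∈ e then v else head' e, ?_, ?_⟩
      · intro e he
        simp only [Finset.mem_filter] at he
        by_cases hve : v ∈ e
        · simp [hve]
        · simpa [hve] using h1 e (hmem e he.1 he.2 hve)
      · intro u hu
        by_cases huv : u = v
        · subst huv
          refine le_trans (Finset.sum_le_sum_of_subset_of_nonneg ?_
            (fun e _ _ => hp0 e)) hv
          intro e he
          simp only [Finset.mem_filter] at he ⊢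
          refine ⟨he.1, ?_⟩
          by_cases hve : u ∈ e
          · exact hve
          · have := h1 e (hmem e he.1.1 he.1.2 hve)
            simp only [hve, if_neg, ite_false] at he
            exact absurd (he.2 ▸ this) hve
        · refine le_trans (Finset.sum_le_sum_of_subset_of_nonneg ?_
            (fun e _ _ => hp0 e)) (h2 u (Finset.mem_erase.2 ⟨huv, hu⟩))
          intro e he
          simp only [Finset.mem_filter] at he ⊢
          have hve : v ∉ e := by
            intro hve
            simp only [hve, ite_true] at he
            exact huv he.2.symm
          simp only [hve, ite_false] at he
          exact ⟨⟨he.1.1, (Finset.mem_filter.1 (hmem e he.1.1 he.1.2 hve)).2⟩, he.2⟩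

open scoped Classical in
/-- If every nonempty vertex subset `U` contains a vertex whose fractional degree within `U`
is at most `1/2`, then there is an orientation of the edges of `G` (a choice `head e ∈ e` of
head for each edge) such that the fractional in-degree of every vertex is at most `1/2`. -/
theorem stmt_2 {V : Type*} [Fintype V] [DecidableEq V]
    (G : SimpleGraph V) [DecidableRel G.Adj]
    (p : Sym2 V → ℝ) (hp0 : ∀ e, 0 ≤ p e)
    (h : ∀ U : Finset V, U.Nonempty → ∃ v ∈ U,
      ∑ e ∈ (G.edgeFinset.filter (fun e => ∀ x ∈ e, x ∈ U)).filter (fun e => v ∈ e), p e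
        ≤ 1 / 2) :
    ∃ head : Sym2 V → V, (∀ e ∈ G.edgeFinset, head e ∈ e) ∧
      ∀ v : V, ∑ e ∈ G.edgeFinset.filter (fun e => head e = v), p e ≤ 1 / 2 := by
  obtain ⟨head, h1, h2⟩ := stmt_2_aux G p hp0 h Finset.univ
  have hfil : G.edgeFinset.filter (fun e => ∀ x ∈ e, x ∈ (Finset.univ : Finset V))
      = G.edgeFinset := by
    apply Finset.filter_true_of_mem; intro e _; simp
  rw [hfil] at h1 h2
  exact ⟨head, h1, fun v => h2 v (Finset.mem_univ v)⟩
end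

section
/- Let G = (V, E) be a directed graph, p : E → ℝ≥0 with fractional in-degree at most 1/2 at every vertex, and t : E → ℝ≥0. Each edge is independently active with probability p_e. Choose A ⊆ V uniformly at random (each vertex independently, also independent of edge activations) and let Ŝ = {(u,v) : u ∈ A, v ∉ A}. For e = (u,v) ∈ Ŝ, let b_e(Ŝ) be the probability (over edge activations) that e is spanned by the active edges of Ŝ ∖ {e} in the graphic matroid. Then E_Ŝ[∑_{e ∈ Ŝ} p_e t_e (1 − b_e(Ŝ))] ≥ (1/8) ∑_{e ∈ E} p_e t_e. -/
open Finset

lemma aux_sum_w_one {α : Type*} [DecidableEq α] (S : Finset α) (p : α → ℝ) :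
    ∑ R ∈ S.powerset, (∏ f ∈ R, p f) * ∏ f ∈ S \ R, (1 - p f) = 1 := by
  rw [← Finset.prod_add]; simp

lemma aux_marginal {α : Type*} [DecidableEq α] (S : Finset α) (p : α → ℝ) (g : α) (hg : g ∈ S) :
    ∑ R ∈ S.powerset, (if g ∈ R then (∏ f ∈ R, p f) * ∏ f ∈ S \ R, (1 - p f) else 0)
      = p g := by
  have hgE : g ∉ S.erase g := Finset.notMem_erase _ _
  rw [(Finset.insert_erase hg).symm, Finset.powerset_insert, Finset.sum_union]
  · rw [Finset.sum_eq_zero (fun R hR => by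
      simp only [Finset.mem_powerset] at hR
      rw [if_neg (fun h => hgE (hR h))]), zero_add]
    rw [Finset.sum_image (fun R hR R' hR' h => by
      simp only [Finset.mem_coe, Finset.mem_powerset] at hR hR'
      have : ∀ B : Finset α, B ⊆ S.erase g → (insert g B).erase g = B := fun B hB => by
        rw [Finset.erase_insert (fun h => hgE (hB h))]
      rw [← this R hR, ← this R' hR', h])]
    have key : ∀ R ∈ (S.erase g).powerset,
        (if g ∈ insert g R then (∏ f ∈ insert g R, p f) *
          ∏ f ∈ insert g (S.erase g) \ insert g R, (1 - p f) else 0)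
        = p g * ((∏ f ∈ R, p f) * ∏ f ∈ (S.erase g) \ R, (1 - p f)) := by
      intro R hR
      simp only [Finset.mem_powerset] at hR
      have hgR : g ∉ R := fun h => hgE (hR h)
      rw [if_pos (Finset.mem_insert_self _ _), Finset.prod_insert hgR]
      have : insert g (S.erase g) \ insert g R = (S.erase g) \ R := by
        ext x; simp only [Finset.mem_sdiff, Finset.mem_insert]
        constructor
        · rintro ⟨hx1 | hx1, hx2⟩
          · exact absurd (Or.inl hx1) hx2
          · exact ⟨hx1, fun h => hx2 (Or.inr h)⟩
        · rintro ⟨hx1, hx2⟩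
          exact ⟨Or.inr hx1, fun h => h.elim (fun h' => hgE (h' ▸ hx1)) hx2⟩
      rw [this]; ring
    rw [Finset.sum_congr rfl key, ← Finset.mul_sum, aux_sum_w_one, mul_one]
  · rw [Finset.disjoint_left]
    intro R hR hR'
    simp only [Finset.mem_powerset] at hR
    simp only [Finset.mem_image] at hR'
    obtain ⟨B, hB, rfl⟩ := hR'
    exact hgE (hR (Finset.mem_insert_self _ _))

lemma aux_reach {V : Type*} (R : Finset (V × V)) (u v : V) (huv : u ≠ v)
    (h : (SimpleGraph.fromEdgeSet {s | ∃ f ∈ R, s = s(f.1, f.2)}).Reachable u v) :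
    ∃ f ∈ R, f.1 = v ∨ f.2 = v := by
  obtain ⟨w⟩ := h.symm
  cases w with
  | nil => exact absurd rfl huv.symm
  | cons hadj w' =>
    rw [SimpleGraph.fromEdgeSet_adj] at hadj
    obtain ⟨⟨f, hf, hs⟩, -⟩ := hadj
    rw [Sym2.eq_iff] at hs
    rcases hs with ⟨h1, h2⟩ | ⟨h1, h2⟩
    · exact ⟨f, hf, Or.inl h1.symm⟩
    · exact ⟨f, hf, Or.inr h1.symm⟩

open scoped Classical in
lemma aux_count {V : Type*} [Fintype V] (u v : V) (huv : u ≠ v) :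
    ((Finset.univ.powerset.filter (fun A : Finset V => u ∈ A ∧ v ∉ A)).card : ℝ) * 4
      = 2 ^ Fintype.card V := by
  have hcard : (Finset.univ.powerset.filter (fun A : Finset V => u ∈ A ∧ v ∉ A)).card
      = ((Finset.univ.erase u).erase v).powerset.card := by
    apply Finset.card_bij' (fun A _ => A.erase u) (fun B _ => insert u B)
    · intro A hA
      simp only [Finset.mem_filter] at hA
      exact Finset.insert_erase hA.2.1
    · intro B hB
      simp only [Finset.mem_powerset] at hB
      exact Finset.erase_insert (fun h => (Finset.mem_erase.1 (Finset.mem_erase.1 (hB h)).2).1 rfl)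
    · intro A hA
      simp only [Finset.mem_filter, Finset.mem_powerset] at hA
      obtain ⟨-, hu, hv⟩ := hA
      simp only [Finset.mem_powerset]
      intro x hx
      simp only [Finset.mem_erase] at hx ⊢
      exact ⟨fun h => hv (h ▸ hx.2), hx.1, Finset.mem_univ x⟩
    · intro B hB
      simp only [Finset.mem_powerset] at hB
      refine Finset.mem_filter.2 ⟨Finset.mem_powerset.2 (Finset.subset_univ _),
        Finset.mem_insert_self _ _, fun h => ?_⟩
      rcases Finset.mem_insert.1 h with h | h
      · exact huv h.symm
      · exact (Finset.mem_erase.1 (hB h)).1 rfl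
  rw [hcard, Finset.card_powerset, Finset.card_erase_of_mem, Finset.card_erase_of_mem,
    Finset.card_univ]
  · have h2 : 2 ≤ Fintype.card V := by
      have := Fintype.card_le_of_injective (fun b : Bool => if b then u else v)
        (fun a b hab => by cases a <;> cases b <;> simp_all)
      simpa using this
    push_cast
    rw [show (4 : ℝ) = 2 ^ 2 by norm_num, ← pow_add]
    congr 1
    omega
  · exact Finset.mem_univ u
  · exact Finset.mem_erase.2 ⟨huv.symm, Finset.mem_univ v⟩

open scoped Classical in
lemma aux_b {V : Type*} [Fintype V] (E : Finset (V × V))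
    (p : V × V → ℝ) (hp0 : ∀ e, 0 ≤ p e) (hp1 : ∀ e, p e ≤ 1)
    (hin : ∀ v : V, ∑ e ∈ E.filter (fun e => e.2 = v), p e ≤ 1 / 2)
    (A : Finset V) (e : V × V) (he : e ∈ E.filter (fun e => e.1 ∈ A ∧ e.2 ∉ A)) :
    ∑ R ∈ ((E.filter (fun e => e.1 ∈ A ∧ e.2 ∉ A)).erase e).powerset,
      (if (SimpleGraph.fromEdgeSet {s | ∃ f ∈ R, s = s(f.1, f.2)}).Reachable e.1 e.2
        then (∏ f ∈ R, p f) *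
          ∏ f ∈ ((E.filter (fun e => e.1 ∈ A ∧ e.2 ∉ A)).erase e) \ R, (1 - p f)
        else 0) ≤ 1 / 2 := by
  set S' := (E.filter (fun e => e.1 ∈ A ∧ e.2 ∉ A)).erase e with hS'
  set T := S'.filter (fun f => f.2 = e.2) with hT
  obtain ⟨heE, he1, he2⟩ := Finset.mem_filter.1 he
  have hne : e.1 ≠ e.2 := fun h => he2 (h ▸ he1)
  have hw : ∀ R : Finset (V × V), 0 ≤ (∏ f ∈ R, p f) * ∏ f ∈ S' \ R, (1 - p f) :=
    fun R => mul_nonneg (Finset.prod_nonneg fun f _ => hp0 f)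
      (Finset.prod_nonneg fun f _ => by linarith [hp1 f])
  have step1 : ∀ R ∈ S'.powerset,
      (if (SimpleGraph.fromEdgeSet {s | ∃ f ∈ R, s = s(f.1, f.2)}).Reachable e.1 e.2
        then (∏ f ∈ R, p f) * ∏ f ∈ S' \ R, (1 - p f) else 0)
      ≤ ∑ g ∈ T, (if g ∈ R then (∏ f ∈ R, p f) * ∏ f ∈ S' \ R, (1 - p f) else 0) := by
    intro R hR
    simp only [Finset.mem_powerset] at hR
    split_ifs with hreach
    · obtain ⟨f, hfR, hf⟩ := aux_reach R e.1 e.2 hne hreach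
      have hfS' : f ∈ S' := hR hfR
      have hfE : f ∈ E.filter (fun e => e.1 ∈ A ∧ e.2 ∉ A) := Finset.mem_of_mem_erase hfS'
      obtain ⟨-, hf1, hf2⟩ := Finset.mem_filter.1 hfE
      have hf2' : f.2 = e.2 := hf.elim (fun h => absurd (h ▸ hf1) he2) id
      have hfT : f ∈ T := Finset.mem_filter.2 ⟨hfS', hf2'⟩
      have hnn : ∀ g ∈ T, (0:ℝ) ≤ (if g ∈ R then (∏ f ∈ R, p f) * ∏ f ∈ S' \ R, (1 - p f) else 0) := by
        intro g _
        split_ifs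
        · exact hw R
        · exact le_refl 0
      calc (∏ f ∈ R, p f) * ∏ f ∈ S' \ R, (1 - p f)
          = (if f ∈ R then (∏ f ∈ R, p f) * ∏ f ∈ S' \ R, (1 - p f) else 0) := by
            rw [if_pos hfR]
        _ ≤ _ := Finset.single_le_sum hnn hfT
    · exact Finset.sum_nonneg fun g _ => by split_ifs; exacts [hw R, le_refl 0]
  calc _ ≤ ∑ R ∈ S'.powerset, ∑ g ∈ T,
        (if g ∈ R then (∏ f ∈ R, p f) * ∏ f ∈ S' \ R, (1 - p f) else 0) :=
        Finset.sum_le_sum step1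
    _ = ∑ g ∈ T, ∑ R ∈ S'.powerset,
        (if g ∈ R then (∏ f ∈ R, p f) * ∏ f ∈ S' \ R, (1 - p f) else 0) := Finset.sum_comm
    _ = ∑ g ∈ T, p g := Finset.sum_congr rfl fun g hg =>
        aux_marginal S' p g (Finset.mem_filter.1 hg).1
    _ ≤ ∑ g ∈ E.filter (fun f => f.2 = e.2), p g := by
        apply Finset.sum_le_sum_of_subset_of_nonneg
        · intro g hg
          obtain ⟨hg1, hg2⟩ := Finset.mem_filter.1 hg
          exact Finset.mem_filter.2
            ⟨(Finset.mem_filter.1 (Finset.mem_of_mem_erase hg1)).1, hg2⟩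
        · exact fun g _ _ => hp0 g
    _ ≤ 1 / 2 := hin e.2


open scoped Classical in
/-- Directed graph with fractional in-degree at most `1/2` at every vertex, edges
independently active with probability `p e`.  Choosing `A ⊆ V` uniformly at random and
letting `Ŝ = {(u,v) ∈ E : u ∈ A, v ∉ A}`, with `b_e(Ŝ)` the probability that `e` is spanned
by the active edges of `Ŝ ∖ {e}`, we have
`E_Ŝ[∑_{e ∈ Ŝ} p_e t_e (1 - b_e(Ŝ))] ≥ (1/8) ∑_{e ∈ E} p_e t_e`. -/
theorem stmt_7 {V : Type*} [Fintype V]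
    (E : Finset (V × V)) (hE : ∀ e ∈ E, e.1 ≠ e.2)
    (p t : V × V → ℝ) (hp0 : ∀ e, 0 ≤ p e) (hp1 : ∀ e, p e ≤ 1) (ht : ∀ e, 0 ≤ t e)
    (hin : ∀ v : V, ∑ e ∈ E.filter (fun e => e.2 = v), p e ≤ 1 / 2) :
    (1 / 8) * ∑ e ∈ E, p e * t e ≤
      (∑ A ∈ (Finset.univ : Finset V).powerset,
        ∑ e ∈ E.filter (fun e => e.1 ∈ A ∧ e.2 ∉ A), p e * t e *
          (1 - ∑ R ∈ ((E.filter (fun e => e.1 ∈ A ∧ e.2 ∉ A)).erase e).powerset,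
            (if (SimpleGraph.fromEdgeSet {s | ∃ f ∈ R, s = s(f.1, f.2)}).Reachable e.1 e.2
              then (∏ f ∈ R, p f) *
                ∏ f ∈ ((E.filter (fun e => e.1 ∈ A ∧ e.2 ∉ A)).erase e) \ R, (1 - p f)
              else 0)))
        / 2 ^ Fintype.card V := by
  have h2n : (0:ℝ) < 2 ^ Fintype.card V := by positivity
  rw [le_div_iff₀ h2n]
  have key : ∀ A ∈ (Finset.univ : Finset V).powerset,
      ∑ e ∈ E.filter (fun e => e.1 ∈ A ∧ e.2 ∉ A), p e * t e * (1/2)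
      ≤ ∑ e ∈ E.filter (fun e => e.1 ∈ A ∧ e.2 ∉ A), p e * t e *
          (1 - ∑ R ∈ ((E.filter (fun e => e.1 ∈ A ∧ e.2 ∉ A)).erase e).powerset,
            (if (SimpleGraph.fromEdgeSet {s | ∃ f ∈ R, s = s(f.1, f.2)}).Reachable e.1 e.2
              then (∏ f ∈ R, p f) *
                ∏ f ∈ ((E.filter (fun e => e.1 ∈ A ∧ e.2 ∉ A)).erase e) \ R, (1 - p f)
              else 0)) := by
    intro A _
    apply Finset.sum_le_sum
    intro e he
    have hb := aux_b E p hp0 hp1 hin A e he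
    have hpt : 0 ≤ p e * t e := mul_nonneg (hp0 e) (ht e)
    have h12 := le_sub_comm.2 (hb.trans_eq (by norm_num : (1:ℝ)/2 = 1 - 1/2))
    exact mul_le_mul_of_nonneg_left h12 hpt
  have count_eq : ∑ A ∈ (Finset.univ : Finset V).powerset,
      ∑ e ∈ E.filter (fun e => e.1 ∈ A ∧ e.2 ∉ A), p e * t e * (1/2)
      = 1/8 * (∑ e ∈ E, p e * t e) * 2 ^ Fintype.card V := by
    have step : ∀ A : Finset V, ∑ e ∈ E.filter (fun e => e.1 ∈ A ∧ e.2 ∉ A),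
        p e * t e * (1/2) = ∑ e ∈ E, (if e.1 ∈ A ∧ e.2 ∉ A then p e * t e * (1/2) else 0) :=
      fun A => Finset.sum_filter _ _
    rw [Finset.sum_congr rfl (fun A _ => step A), Finset.sum_comm, Finset.mul_sum,
      Finset.sum_mul]
    apply Finset.sum_congr rfl
    intro e he
    rw [← Finset.sum_filter, Finset.sum_const, nsmul_eq_mul]
    have hc := aux_count e.1 e.2 (hE e he)
    rw [← hc]
    ring
  calc 1/8 * (∑ e ∈ E, p e * t e) * 2 ^ Fintype.card V
      = ∑ A ∈ (Finset.univ : Finset V).powerset,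
        ∑ e ∈ E.filter (fun e => e.1 ∈ A ∧ e.2 ∉ A), p e * t e * (1/2) := count_eq.symm
    _ ≤ _ := Finset.sum_le_sum key
end

section
/- Let X be a real-valued random variable with CDF F and let p ∈ (0, 1]. Then for any event H with P(H) = p, E[X | X ≥ F⁻¹(1−p)] ≥ E[X | H], where F⁻¹ is the (generalized) inverse CDF and ties at the threshold are broken so that the conditioning event has probability exactly p. -/
open MeasureTheory in
/-- Let `X` be an integrable random variable and `p ∈ (0,1]`.  Let `q` be the generalized
inverse CDF value `F⁻¹(1-p)`, characterized by `μ{X > q} ≤ p ≤ μ{X ≥ q}`, and let `Q` be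
the top `p`-quantile event: `{X > q} ⊆ Q ⊆ {X ≥ q}` with ties broken so that `μ Q = p`.
Then for any event `H` with `μ H = p`, `E[X | Q] ≥ E[X | H]`. -/
theorem stmt_8 {Ω : Type*} [MeasurableSpace Ω] (μ : Measure Ω) [IsProbabilityMeasure μ]
    (X : Ω → ℝ) (hX : Integrable X μ) (hXm : Measurable X)
    (p : ℝ) (hp0 : 0 < p) (hp1 : p ≤ 1)
    (q : ℝ)
    (hq1 : μ {ω | q < X ω} ≤ ENNReal.ofReal p)
    (hq2 : ENNReal.ofReal p ≤ μ {ω | q ≤ X ω})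
    (Q H : Set Ω) (hQm : MeasurableSet Q) (hHm : MeasurableSet H)
    (hQsub : {ω | q < X ω} ⊆ Q) (hQsup : Q ⊆ {ω | q ≤ X ω})
    (hQp : μ Q = ENNReal.ofReal p) (hHp : μ H = ENNReal.ofReal p) :
    (∫ ω in H, X ω ∂μ) / p ≤ (∫ ω in Q, X ω ∂μ) / p := by
  have hfin : ∀ s : Set Ω, μ s ≠ ⊤ := fun s => (measure_lt_top μ s).ne
  -- μ (Q \ H) = μ (H \ Q)
  have hmeq : μ (Q \ H) = μ (H \ Q) := by
    have h1 : μ (Q ∩ H) + μ (Q \ H) = μ Q := measure_inter_add_diff Q hHm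
    have h2 : μ (H ∩ Q) + μ (H \ Q) = μ H := measure_inter_add_diff H hQm
    rw [Set.inter_comm] at h2
    have := h1.trans (hQp.trans (hHp.symm.trans h2.symm))
    exact (ENNReal.add_right_inj (hfin _)).mp this
  have hIQ : IntegrableOn X Q μ := hX.integrableOn
  have hIH : IntegrableOn X H μ := hX.integrableOn
  -- key integral comparison
  have hle1 : ∫ ω in H \ Q, X ω ∂μ ≤ q * (μ (H \ Q)).toReal := by
    rw [mul_comm, ← smul_eq_mul]
    change _ ≤ μ.real (H \ Q) • q
    rw [← setIntegral_const]
    apply setIntegral_mono_on (hIH.mono_set Set.diff_subset) (integrableOn_const (measure_lt_top _ _).ne) (hHm.diff hQm)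
    intro x hx
    by_contra hlt
    exact hx.2 (hQsub (lt_of_not_ge hlt))
  have hle2 : q * (μ (Q \ H)).toReal ≤ ∫ ω in Q \ H, X ω ∂μ := by
    rw [mul_comm, ← smul_eq_mul]
    change μ.real (Q \ H) • q ≤ _
    rw [← setIntegral_const]
    apply setIntegral_mono_on (integrableOn_const (measure_lt_top _ _).ne) (hIQ.mono_set Set.diff_subset) (hQm.diff hHm)
    intro x hx
    exact hQsup hx.1
  have hsplitH : ∫ ω in H ∩ Q, X ω ∂μ + ∫ ω in H \ Q, X ω ∂μ = ∫ ω in H, X ω ∂μ :=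
    integral_inter_add_diff hQm hIH
  have hsplitQ : ∫ ω in Q ∩ H, X ω ∂μ + ∫ ω in Q \ H, X ω ∂μ = ∫ ω in Q, X ω ∂μ :=
    integral_inter_add_diff hHm hIQ
  rw [Set.inter_comm] at hsplitQ
  have key : ∫ ω in H, X ω ∂μ ≤ ∫ ω in Q, X ω ∂μ := by
    rw [← hsplitH, ← hsplitQ]
    apply add_le_add le_rfl
    calc ∫ ω in H \ Q, X ω ∂μ ≤ q * (μ (H \ Q)).toReal := hle1
      _ = q * (μ (Q \ H)).toReal := by rw [hmeq]
      _ ≤ ∫ ω in Q \ H, X ω ∂μ := hle2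
  gcongr
end

section
/- Given a matroid M = (N, I) and independent nonnegative random weights X_i for i ∈ N, define p_i = P[i ∈ I*] where I* is the maximum-weight basis (with a fixed tie-breaking rule). Then the vector p lies in the matroid polytope P_M, and OPT := E[max_{I ∈ I} ∑_{i∈I} X_i] = ∑_i p_i · E[X_i | i ∈ I*] ≤ ∑_i p_i t_i, where t_i = E[X_i | X_i ≥ F_i⁻¹(1 − p_i)]. -/
open scoped Classical in
/-- Ex-ante relaxation for matroids (Lemma 4.1).  Over a finite probability space, let `I*`
be the maximum-weight independent set (fixed tie-breaking) of a matroid given by an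
independence predicate `Ind`, and let `p i = P[i ∈ I*]`.  Let `t i` be the expectation of
`X i` conditioned on its top `p i`-quantile, characterized by a fractional event `g i`
(tie-breaking at the threshold `q i` so that the event has probability exactly `p i`).
Then `p` lies in the matroid polytope (`∑_{i∈S} p i ≤ rank S` for all `S`),
`OPT = E[∑_{i ∈ I*} X i] = ∑_i p i · E[X i | i ∈ I*]`, and `OPT ≤ ∑_i p i · t i`. -/
theorem stmt_9 {N : Type*} [Fintype N] {Ω : Type*} [Fintype Ω]
    (μ : Ω → ℝ) (hμ0 : ∀ ω, 0 ≤ μ ω) (hμ1 : ∑ ω, μ ω = 1)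
    (Ind : Finset N → Prop) (hempty : Ind ∅)
    (hdown : ∀ I J : Finset N, I ⊆ J → Ind J → Ind I)
    (hexch : ∀ I J : Finset N, Ind I → Ind J → I.card < J.card →
      ∃ x ∈ J \ I, Ind (insert x I))
    (X : N → Ω → ℝ) (hX0 : ∀ i ω, 0 ≤ X i ω)
    (Istar : Ω → Finset N) (hIstarInd : ∀ ω, Ind (Istar ω))
    (hIstarOpt : ∀ ω, ∀ I : Finset N, Ind I → ∑ i ∈ I, X i ω ≤ ∑ i ∈ Istar ω, X i ω)
    (p : N → ℝ) (hp : ∀ i, p i = ∑ ω, μ ω * (if i ∈ Istar ω then 1 else 0))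
    (t q : N → ℝ) (g : N → Ω → ℝ)
    (hg01 : ∀ i ω, 0 ≤ g i ω ∧ g i ω ≤ 1)
    (hgup : ∀ i ω, q i < X i ω → g i ω = 1)
    (hgdown : ∀ i ω, X i ω < q i → g i ω = 0)
    (hgp : ∀ i, ∑ ω, μ ω * g i ω = p i)
    (hgt : ∀ i, t i * p i = ∑ ω, μ ω * g i ω * X i ω) :
    (∀ S : Finset N, ∑ i ∈ S, p i ≤ (((S.powerset.filter Ind).sup Finset.card : ℕ) : ℝ))
    ∧ (∑ ω, μ ω * ∑ i ∈ Istar ω, X i ω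
        = ∑ i, p i * ((∑ ω, μ ω * (if i ∈ Istar ω then 1 else 0) * X i ω) / p i))
    ∧ (∑ ω, μ ω * ∑ i ∈ Istar ω, X i ω ≤ ∑ i, p i * t i) := by

  classical
  set A : N → ℝ := fun i => ∑ ω, μ ω * (if i ∈ Istar ω then 1 else 0) * X i ω with hA
  -- rewrite LHS as sum over i
  have hswap : ∑ ω, μ ω * ∑ i ∈ Istar ω, X i ω = ∑ i, A i := by
    have : ∀ ω, μ ω * ∑ i ∈ Istar ω, X i ω
        = ∑ i, μ ω * (if i ∈ Istar ω then 1 else 0) * X i ω := by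
      intro ω
      rw [Finset.mul_sum]
      rw [show (∑ i ∈ Istar ω, μ ω * X i ω)
          = ∑ i, (if i ∈ Istar ω then μ ω * X i ω else 0) by
        rw [Finset.sum_ite_mem, Finset.univ_inter]]
      apply Finset.sum_congr rfl
      intro i _
      by_cases h : i ∈ Istar ω <;> simp [h]
    simp_rw [this]
    rw [Finset.sum_comm]
  have hAnn : ∀ i, p i = 0 → A i = 0 := by
    intro i hpi
    have h0 : ∀ ω ∈ Finset.univ, 0 ≤ μ ω * (if i ∈ Istar ω then 1 else 0) := by
      intro ω _
      by_cases h : i ∈ Istar ω <;> simp [h, hμ0 ω]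
    have := (Finset.sum_eq_zero_iff_of_nonneg h0).mp ((hp i).symm.trans hpi)
    apply Finset.sum_eq_zero
    intro ω _
    rw [this ω (Finset.mem_univ ω), zero_mul]
  have key : ∀ i, A i ≤ ∑ ω, μ ω * g i ω * X i ω := by
    intro i
    have h1 : ∀ ω, 0 ≤ μ ω * (g i ω - (if i ∈ Istar ω then 1 else 0)) * (X i ω - q i) := by
      intro ω
      rcases lt_trichotomy (X i ω) (q i) with h | h | h
      · rw [hgdown i ω h]
        by_cases hm : i ∈ Istar ω <;> simp [hm] <;> nlinarith [hμ0 ω]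
      · simp [h]
      · rw [hgup i ω h]
        by_cases hm : i ∈ Istar ω <;> simp [hm] <;> nlinarith [hμ0 ω]
    have h2 : 0 ≤ ∑ ω, μ ω * (g i ω - (if i ∈ Istar ω then 1 else 0)) * (X i ω - q i) :=
      Finset.sum_nonneg fun ω _ => h1 ω
    have expand : ∑ ω, μ ω * (g i ω - (if i ∈ Istar ω then 1 else 0)) * (X i ω - q i)
        = (∑ ω, μ ω * g i ω * X i ω) - A i
          - q i * ((∑ ω, μ ω * g i ω) - (∑ ω, μ ω * (if i ∈ Istar ω then 1 else 0))) := by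
      rw [hA]
      simp only [Finset.mul_sum, ← Finset.sum_sub_distrib]
      apply Finset.sum_congr rfl
      intro ω _
      ring
    rw [expand, hgp i, ← hp i, sub_self, mul_zero, sub_zero] at h2
    linarith
  refine ⟨?_, ?_, ?_⟩
  · intro S
    have hrank : ∀ ω, ((S ∩ Istar ω).card : ℝ)
        ≤ (((S.powerset.filter Ind).sup Finset.card : ℕ) : ℝ) := by
      intro ω
      have hmem : S ∩ Istar ω ∈ S.powerset.filter Ind := by
        rw [Finset.mem_filter, Finset.mem_powerset]
        exact ⟨Finset.inter_subset_left, hdown _ _ Finset.inter_subset_right (hIstarInd ω)⟩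
      exact_mod_cast Finset.le_sup hmem
    have hsum : ∑ i ∈ S, p i = ∑ ω, μ ω * ((S ∩ Istar ω).card : ℝ) := by
      simp_rw [hp]
      rw [Finset.sum_comm]
      apply Finset.sum_congr rfl
      intro ω _
      rw [← Finset.mul_sum]
      congr 1
      rw [Finset.sum_boole, Finset.filter_mem_eq_inter]
    rw [hsum]
    calc ∑ ω, μ ω * ((S ∩ Istar ω).card : ℝ)
        ≤ ∑ ω, μ ω * (((S.powerset.filter Ind).sup Finset.card : ℕ) : ℝ) :=
          Finset.sum_le_sum fun ω _ => mul_le_mul_of_nonneg_left (hrank ω) (hμ0 ω)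
      _ = (((S.powerset.filter Ind).sup Finset.card : ℕ) : ℝ) := by
          rw [← Finset.sum_mul, hμ1, one_mul]
  · rw [hswap]
    apply Finset.sum_congr rfl
    intro i _
    by_cases hpi : p i = 0
    · rw [hpi, zero_mul, hAnn i hpi]
    · rw [mul_div_cancel₀ _ hpi]
  · rw [hswap]
    apply Finset.sum_le_sum
    intro i _
    calc A i ≤ ∑ ω, μ ω * g i ω * X i ω := key i
      _ = t i * p i := (hgt i).symm
      _ = p i * t i := mul_comm _ _
end

section
/- Let X_1, …, X_n be independent nonnegative random variables and let T ≥ 0 satisfy P[fewer than k of the X_i exceed T] = 1/2. Consider the online algorithm that accepts item i iff X_i > T and fewer than k items have been accepted so far. Then the expected total value accepted is at least (1/2) · E[max_{S : |S| ≤ k} ∑_{i ∈ S} X_i]. -/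
/-- One step of the static-threshold online algorithm for a `k`-uniform constraint:
state is (number accepted so far, value accepted so far); an arriving item of value `x`
is accepted iff `x` exceeds the threshold `T` and fewer than `k` items were accepted. -/
noncomputable def algStep (T : ℝ) (k : ℕ) (s : ℕ × ℝ) (x : ℝ) : ℕ × ℝ :=
  if T < x ∧ s.1 < k then (s.1 + 1, s.2 + x) else s

/-- Total value accepted by the static-threshold algorithm on the value sequence `xs`
(items arrive in the order of the list). -/
noncomputable def algValue (T : ℝ) (k : ℕ) (xs : List ℝ) : ℝ :=
  (xs.foldl (algStep T k) (0, 0)).2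

/-- The prophet's benchmark: the maximum over subsets of size at most `k` of the total value. -/
noncomputable def prophetValue {n : ℕ} (k : ℕ) (x : Fin n → ℝ) : ℝ :=
  (((Finset.univ : Finset (Fin n)).powerset.filter fun S => S.card ≤ k).sup'
    ⟨∅, by simp⟩ fun S => ∑ i ∈ S, x i)

open Finset

/-- The first component of the fold is the count of accepted items, capped at `k`. -/
private lemma fold_fst (T : ℝ) (k : ℕ) :
    ∀ (xs : List ℝ) (s : ℕ × ℝ), s.1 ≤ k →
      (xs.foldl (algStep T k) s).1
        = min (s.1 + (xs.map fun a => if T < a then 1 else 0).sum) k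
  | [], s, hs => by simpa using (Nat.min_eq_left hs).symm
  | x :: xs, s, hs => by
    by_cases hx : T < x
    · by_cases hsk : s.1 < k
      · rw [List.foldl_cons, fold_fst T k xs _ (by simp [algStep, hx, hsk])]
        simp [algStep, hx, hsk]
        omega
      · have hs1 : s.1 = k := le_antisymm hs (not_lt.1 hsk)
        rw [List.foldl_cons]
        simp only [algStep, hx, hsk, and_false, if_false]
        rw [fold_fst T k xs s hs]
        simp [hx]; omega
    · rw [List.foldl_cons]
      simp only [algStep, hx, false_and, if_false]
      rw [fold_fst T k xs s hs]
      simp [hx]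
  termination_by xs => xs.length

/-- The quantity `value - count * T` is nondecreasing along the fold. -/
private lemma fold_snd_ge (T : ℝ) (k : ℕ) :
    ∀ (xs : List ℝ) (s : ℕ × ℝ),
      s.2 - (s.1 : ℝ) * T
        ≤ (xs.foldl (algStep T k) s).2 - ((xs.foldl (algStep T k) s).1 : ℝ) * T
  | [], s => le_refl _
  | x :: xs, s => by
    rw [List.foldl_cons]
    refine le_trans ?_ (fold_snd_ge T k xs (algStep T k s x))
    by_cases h : T < x ∧ s.1 < k
    · simp only [algStep, if_pos h]
      push_cast
      nlinarith [h.1]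
    · simp [algStep, h]
  termination_by xs => xs.length

/-- If everything exceeding the threshold fits, the final value is the sum of all
elements exceeding the threshold. -/
private lemma fold_all (T : ℝ) (k : ℕ) :
    ∀ (xs : List ℝ) (s : ℕ × ℝ),
      s.1 + (xs.map fun a => if T < a then 1 else 0).sum ≤ k →
      (xs.foldl (algStep T k) s).2 = s.2 + (xs.map fun a => if T < a then a else 0).sum
  | [], s, _ => by simp
  | x :: xs, s, h => by
    by_cases hx : T < x
    · have h' : s.1 + 1 + ((xs.map fun a => if T < a then 1 else 0)).sum ≤ k := by
        simp [hx] at h; omega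
      have hsk : s.1 < k := by omega
      rw [List.foldl_cons]
      simp only [algStep, hx, hsk, and_true, if_true, true_and]
      rw [fold_all T k xs _ (by simp [algStep, hx, hsk]; omega)]
      simp [algStep, hx, hsk]
      ring
    · rw [List.foldl_cons]
      simp only [algStep, hx, false_and, if_false]
      rw [fold_all T k xs s (by simpa [hx] using h)]
      simp [hx]
  termination_by xs => xs.length

private lemma map_ofFn_sum {α : Type*} [AddCommMonoid α] {n : ℕ} (x : Fin n → ℝ) (f : ℝ → α) :
    ((List.ofFn x).map f).sum = ∑ i, f (x i) := by
  rw [List.map_ofFn, List.sum_ofFn]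
  rfl

/-- The pointwise guarantee of the algorithm. -/
private lemma pointwise {n : ℕ} (k : ℕ) (T : ℝ) (hT : 0 ≤ T) (x : Fin n → ℝ) :
    (k : ℝ) * T *
        (1 - (if ((Finset.univ : Finset (Fin n)).filter fun i => T < x i).card < k
            then (1 : ℝ) else 0))
      + ∑ i, (max (x i - T) 0) *
          (if ((Finset.univ.erase i).filter fun j => T < x j).card < k then (1 : ℝ) else 0)
      ≤ algValue T k (List.ofFn x) := by
  classical
  set C := ((Finset.univ : Finset (Fin n)).filter fun i => T < x i).card with hCdef
  clear_value C
  have hcount : (((List.ofFn x).map fun a => if T < a then 1 else 0)).sum = C := by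
    rw [map_ofFn_sum, hCdef, Finset.card_filter]
  have herase : ∀ i : Fin n, ((Finset.univ.erase i).filter fun j => T < x j)
      = ((Finset.univ : Finset (Fin n)).filter fun j => T < x j).erase i := by
    intro i; rw [Finset.filter_erase]
  rcases lt_or_ge C k with hCk | hCk
  · -- all items exceeding the threshold get accepted
    have hval : algValue T k (List.ofFn x) = ∑ i, if T < x i then x i else 0 := by
      unfold algValue
      rw [fold_all T k _ (0, 0) (by rw [hcount]; omega)]
      rw [map_ofFn_sum]; simp
    have hind : ∀ i : Fin n,
        (((Finset.univ.erase i).filter fun j => T < x j).card < k) := by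
      intro i
      rw [herase i]
      refine lt_of_le_of_lt (Finset.card_le_card (Finset.erase_subset _ _)) ?_
      rw [← hCdef]; exact hCk
    rw [hval, if_pos hCk]
    simp only [hind, if_pos, mul_one, sub_self, mul_zero, zero_add]
    refine Finset.sum_le_sum fun i _ => ?_
    by_cases hxi : T < x i
    · rw [if_pos hxi]
      rcases le_total (x i - T) 0 with h | h
      · rw [max_eq_right h]; linarith
      · rw [max_eq_left h]; linarith
    · rw [if_neg hxi]
      push_neg at hxi
      rw [max_eq_right (by linarith)]
  · rw [if_neg (not_lt.2 hCk)]
    rcases eq_or_lt_of_le hCk with hEq | hlt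
    · -- C = k : everything exceeding is accepted, value = k*T + sum of surpluses
      have hval : algValue T k (List.ofFn x) = ∑ i, if T < x i then x i else 0 := by
        unfold algValue
        rw [fold_all T k _ (0, 0) (by rw [hcount]; omega)]
        rw [map_ofFn_sum]; simp
      have hind : ∀ i : Fin n,
          (max (x i - T) 0) *
              (if ((Finset.univ.erase i).filter fun j => T < x j).card < k then (1 : ℝ) else 0)
            = if T < x i then x i - T else 0 := by
        intro i
        rw [herase i]
        by_cases hxi : T < x i
        · have hmem : i ∈ (Finset.univ : Finset (Fin n)).filter fun j => T < x j := by
            simp [hxi]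
          have hC1 : 1 ≤ C := by rw [hCdef]; exact Finset.card_pos.mpr ⟨i, hmem⟩
          rw [Finset.card_erase_of_mem hmem, if_pos hxi]
          rw [if_pos (by omega), mul_one, max_eq_left (by linarith)]
        · have hmem : i ∉ (Finset.univ : Finset (Fin n)).filter fun j => T < x j := by
            simp [hxi]
          rw [Finset.erase_eq_of_notMem hmem, if_neg hxi, if_neg (by omega), mul_zero]
      simp only [hind]
      rw [hval]
      have hsplit : ∀ i : Fin n, (if T < x i then x i - T else 0)
          = (if T < x i then x i else 0) - (if T < x i then T else 0) := by
        intro i; by_cases hxi : T < x i <;> simp [hxi]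
      have hTc : ∑ i : Fin n, (if T < x i then T else 0) = (C : ℝ) * T := by
        rw [← Finset.sum_filter, Finset.sum_const, hCdef, nsmul_eq_mul]
      rw [Finset.sum_congr rfl fun i _ => hsplit i, Finset.sum_sub_distrib, hTc, ← hEq]
      linarith
    · -- C > k : nothing in the sum survives; value ≥ k*T
      have hind : ∀ i : Fin n,
          ¬(((Finset.univ.erase i).filter fun j => T < x j).card < k) := by
        intro i
        rw [herase i]
        have := Finset.pred_card_le_card_erase
          (s := (Finset.univ : Finset (Fin n)).filter fun j => T < x j) (a := i)
        omega
      have hzero : ∀ i : Fin n, (max (x i - T) 0) *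
          (if ((Finset.univ.erase i).filter fun j => T < x j).card < k then (1 : ℝ) else 0)
            = 0 := fun i => by rw [if_neg (hind i), mul_zero]
      rw [Finset.sum_congr rfl fun i _ => hzero i]
      simp only [Finset.sum_const_zero, add_zero, sub_zero, mul_one]
      have h1 : ((List.ofFn x).foldl (algStep T k) (0, 0)).1 = k := by
        rw [fold_fst T k _ (0, 0) (Nat.zero_le k), hcount]
        omega
      have h2 := fold_snd_ge T k (List.ofFn x) (0, 0)
      rw [h1] at h2
      unfold algValue
      simp only [Nat.cast_zero, zero_mul, sub_zero] at h2
      linarith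

private lemma total_mass {n m : ℕ} (ν : Fin n → Fin m → ℝ) (hν1 : ∀ i, ∑ a, ν i a = 1) :
    ∑ ω : Fin n → Fin m, ∏ i, ν i (ω i) = 1 := by
  rw [← Fintype.prod_sum]
  simp [hν1]

/-- Independence: a function of coordinate `i` and a function not depending on
coordinate `i` decorrelate under the product weights. -/
private lemma factor {n m : ℕ} (ν : Fin n → Fin m → ℝ) (hν1 : ∀ i, ∑ a, ν i a = 1)
    (i : Fin n) (f : Fin m → ℝ) (g : (Fin n → Fin m) → ℝ)
    (hg : ∀ (ω : Fin n → Fin m) (a : Fin m), g (Function.update ω i a) = g ω) :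
    (∑ a, ν i a * f a) * (∑ ω : Fin n → Fin m, (∏ j, ν j (ω j)) * g ω)
      = ∑ ω : Fin n → Fin m, (∏ j, ν j (ω j)) * (f (ω i) * g ω) := by
  classical
  have key : ∀ (ω : Fin n → Fin m) (a : Fin m),
      (∏ j, ν j (Function.update ω i a j)) = ν i a * ∏ j ∈ Finset.univ.erase i, ν j (ω j) := by
    intro ω a
    have hfun : (fun j => ν j (Function.update ω i a j))
        = Function.update (fun j => ν j (ω j)) i (ν i a) := by
      funext j
      rcases eq_or_ne j i with rfl | hji
      · simp
      · simp [Function.update_of_ne hji]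
    rw [hfun, Finset.prod_update_of_mem (Finset.mem_univ i), Finset.sdiff_singleton_eq_erase]
  have keyw : ∀ ω : Fin n → Fin m,
      (∏ j, ν j (ω j)) = ν i (ω i) * ∏ j ∈ Finset.univ.erase i, ν j (ω j) := by
    intro ω
    have := key ω (ω i)
    rwa [Function.update_eq_self] at this
  have lhs_eq : (∑ a, ν i a * f a) * (∑ ω : Fin n → Fin m, (∏ j, ν j (ω j)) * g ω)
      = ∑ p : Fin m × (Fin n → Fin m), (ν i p.1 * f p.1) * ((∏ j, ν j (p.2 j)) * g p.2) := by
    rw [Fintype.sum_prod_type]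
    rw [Finset.sum_mul]
    exact Finset.sum_congr rfl fun a _ => by rw [Finset.mul_sum]
  have rhs_eq : ∑ ω : Fin n → Fin m, (∏ j, ν j (ω j)) * (f (ω i) * g ω)
      = ∑ p : Fin m × (Fin n → Fin m), ν i p.1 * ((∏ j, ν j (p.2 j)) * (f (p.2 i) * g p.2)) := by
    rw [Fintype.sum_prod_type]
    have : ∀ a : Fin m, (∑ ω : Fin n → Fin m,
        ν i a * ((∏ j, ν j (ω j)) * (f (ω i) * g ω)))
        = ν i a * ∑ ω : Fin n → Fin m, (∏ j, ν j (ω j)) * (f (ω i) * g ω) := by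
      intro a; rw [Finset.mul_sum]
    rw [Finset.sum_congr rfl fun a _ => this a, ← Finset.sum_mul, hν1, one_mul]
  rw [lhs_eq, rhs_eq]
  have hinv : Function.Involutive
      (fun p : Fin m × (Fin n → Fin m) => (p.2 i, Function.update p.2 i p.1)) := by
    intro p
    simp [Function.update_idem, Function.update_eq_self]
  refine Fintype.sum_bijective _ hinv.bijective _ _ ?_
  rintro ⟨a, ω⟩
  simp only
  rw [Function.update_self, key, hg, keyw ω]
  ring

/-- Expectation of a function of a single coordinate. -/
private lemma exp_coord {n m : ℕ} (ν : Fin n → Fin m → ℝ) (hν1 : ∀ i, ∑ a, ν i a = 1)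
    (i : Fin n) (f : Fin m → ℝ) :
    ∑ ω : Fin n → Fin m, (∏ j, ν j (ω j)) * f (ω i) = ∑ a, ν i a * f a := by
  have := factor ν hν1 i f (fun _ => 1) (fun _ _ => rfl)
  simp only [mul_one] at this
  rw [total_mass ν hν1, mul_one] at this
  exact this.symm

/-- The prophet value is at most `k*T` plus the sum of the surpluses. -/
private lemma prophet_le {n : ℕ} (k : ℕ) (T : ℝ) (hT : 0 ≤ T) (x : Fin n → ℝ) :
    prophetValue k x ≤ (k : ℝ) * T + ∑ i, max (x i - T) 0 := by
  classical
  unfold prophetValue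
  refine Finset.sup'_le _ _ fun S hS => ?_
  rw [Finset.mem_filter] at hS
  have hcard : S.card ≤ k := hS.2
  calc ∑ i ∈ S, x i ≤ ∑ i ∈ S, (T + max (x i - T) 0) := by
        refine Finset.sum_le_sum fun i _ => ?_
        have : x i - T ≤ max (x i - T) 0 := le_max_left _ _
        linarith
    _ = S.card * T + ∑ i ∈ S, max (x i - T) 0 := by
        rw [Finset.sum_add_distrib, Finset.sum_const, nsmul_eq_mul]
    _ ≤ (k : ℝ) * T + ∑ i, max (x i - T) 0 := by
        have h1 : (S.card : ℝ) * T ≤ (k : ℝ) * T := by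
          have : (S.card : ℝ) ≤ (k : ℝ) := Nat.cast_le.2 hcard
          nlinarith
        have h2 : ∑ i ∈ S, max (x i - T) 0 ≤ ∑ i, max (x i - T) 0 :=
          Finset.sum_le_sum_of_subset_of_nonneg (Finset.subset_univ S)
            (fun i _ _ => le_max_right _ _)
        linarith

/-- Probabilistic-threshold prophet inequality for the `k`-uniform matroid:
`X_1, …, X_n` independent (finitely supported, encoded by a product measure on
`Fin n → Fin m` with marginals `ν i` and values `vals i`), `T ≥ 0` with
`P[fewer than k of the X_i exceed T] = 1/2`.  Then the online algorithm accepting item `i`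
iff `X i > T` and fewer than `k` items were accepted obtains at least
`(1/2)·E[max_{|S| ≤ k} ∑_{i∈S} X i]`. -/
theorem stmt_10 {n m : ℕ} (k : ℕ) (hk : 0 < k)
    (vals : Fin n → Fin m → ℝ) (hvals : ∀ i a, 0 ≤ vals i a)
    (ν : Fin n → Fin m → ℝ) (hν0 : ∀ i a, 0 ≤ ν i a) (hν1 : ∀ i, ∑ a, ν i a = 1)
    (T : ℝ) (hT : 0 ≤ T)
    (hhalf : ∑ ω : Fin n → Fin m, (∏ i, ν i (ω i)) *
        (if ((Finset.univ : Finset (Fin n)).filter fun i => T < vals i (ω i)).card < k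
          then (1 : ℝ) else 0) = 1 / 2) :
    (1 / 2) * ∑ ω : Fin n → Fin m,
        (∏ i, ν i (ω i)) * prophetValue k (fun i => vals i (ω i))
      ≤ ∑ ω : Fin n → Fin m, (∏ i, ν i (ω i)) *
          algValue T k (List.ofFn fun i => vals i (ω i)) := by
  classical
  set w : (Fin n → Fin m) → ℝ := fun ω => ∏ j, ν j (ω j) with hw
  have hw0 : ∀ ω, 0 ≤ w ω := fun ω => Finset.prod_nonneg fun j _ => hν0 j (ω j)
  have hmass : ∑ ω : Fin n → Fin m, w ω = 1 := total_mass ν hν1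
  -- the surplus expectations
  set E : Fin n → ℝ := fun i => ∑ a, ν i a * max (vals i a - T) 0 with hE
  have hE0 : ∀ i, 0 ≤ E i := fun i =>
    Finset.sum_nonneg fun a _ => mul_nonneg (hν0 i a) (le_max_right _ _)
  -- Step A: upper bound the prophet's expectation
  have stepA : ∑ ω : Fin n → Fin m, w ω * prophetValue k (fun i => vals i (ω i))
      ≤ (k : ℝ) * T + ∑ i, E i := by
    have h1 : ∑ ω : Fin n → Fin m, w ω * prophetValue k (fun i => vals i (ω i))
        ≤ ∑ ω : Fin n → Fin m, w ω * ((k : ℝ) * T + ∑ i, max (vals i (ω i) - T) 0) := by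
      refine Finset.sum_le_sum fun ω _ => ?_
      exact mul_le_mul_of_nonneg_left (prophet_le k T hT _) (hw0 ω)
    have h2 : ∑ ω : Fin n → Fin m, w ω * ((k : ℝ) * T + ∑ i, max (vals i (ω i) - T) 0)
        = (k : ℝ) * T + ∑ i, E i := by
      have : ∀ ω : Fin n → Fin m, w ω * ((k : ℝ) * T + ∑ i, max (vals i (ω i) - T) 0)
          = w ω * ((k : ℝ) * T) + ∑ i, w ω * max (vals i (ω i) - T) 0 := by
        intro ω; rw [mul_add, Finset.mul_sum]
      rw [Finset.sum_congr rfl fun ω _ => this ω, Finset.sum_add_distrib,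
        ← Finset.sum_mul, hmass, one_mul, Finset.sum_comm]
      congr 1
      refine Finset.sum_congr rfl fun i _ => ?_
      exact exp_coord ν hν1 i (fun a => max (vals i a - T) 0)
    linarith
  -- Step B: lower bound the algorithm's expectation
  have stepB : (k : ℝ) * T * (1 / 2) + (1 / 2) * ∑ i, E i
      ≤ ∑ ω : Fin n → Fin m, w ω * algValue T k (List.ofFn fun i => vals i (ω i)) := by
    have hptws : ∑ ω : Fin n → Fin m, w ω *
        ((k : ℝ) * T *
          (1 - (if ((Finset.univ : Finset (Fin n)).filter
              fun i => T < vals i (ω i)).card < k then (1 : ℝ) else 0))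
        + ∑ i, (max (vals i (ω i) - T) 0) *
            (if ((Finset.univ.erase i).filter fun j => T < vals j (ω j)).card < k
              then (1 : ℝ) else 0))
        ≤ ∑ ω : Fin n → Fin m, w ω * algValue T k (List.ofFn fun i => vals i (ω i)) := by
      refine Finset.sum_le_sum fun ω _ => ?_
      exact mul_le_mul_of_nonneg_left (pointwise k T hT (fun i => vals i (ω i))) (hw0 ω)
    refine le_trans ?_ hptws
    -- compute / bound the left-hand sum
    have hsplit : ∀ ω : Fin n → Fin m, w ω *
        ((k : ℝ) * T *
          (1 - (if ((Finset.univ : Finset (Fin n)).filter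
              fun i => T < vals i (ω i)).card < k then (1 : ℝ) else 0))
        + ∑ i, (max (vals i (ω i) - T) 0) *
            (if ((Finset.univ.erase i).filter fun j => T < vals j (ω j)).card < k
              then (1 : ℝ) else 0))
        = (k : ℝ) * T * (w ω - w ω *
            (if ((Finset.univ : Finset (Fin n)).filter
              fun i => T < vals i (ω i)).card < k then (1 : ℝ) else 0))
          + ∑ i, w ω * ((max (vals i (ω i) - T) 0) *
            (if ((Finset.univ.erase i).filter fun j => T < vals j (ω j)).card < k
              then (1 : ℝ) else 0)) := by
      intro ω
      rw [mul_add, Finset.mul_sum]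
      congr 1
      · ring
    rw [Finset.sum_congr rfl fun ω _ => hsplit ω, Finset.sum_add_distrib]
    have hfirst : ∑ ω : Fin n → Fin m, (k : ℝ) * T * (w ω - w ω *
        (if ((Finset.univ : Finset (Fin n)).filter
          fun i => T < vals i (ω i)).card < k then (1 : ℝ) else 0))
        = (k : ℝ) * T * (1 / 2) := by
      rw [← Finset.mul_sum, Finset.sum_sub_distrib, hmass]
      have : ∑ ω : Fin n → Fin m, w ω *
          (if ((Finset.univ : Finset (Fin n)).filter
            fun i => T < vals i (ω i)).card < k then (1 : ℝ) else 0) = 1 / 2 := hhalf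
      rw [this]
      norm_num
    have hswap : ∑ ω : Fin n → Fin m, ∑ i, w ω * ((max (vals i (ω i) - T) 0) *
          (if ((Finset.univ.erase i).filter fun j => T < vals j (ω j)).card < k
            then (1 : ℝ) else 0))
        = ∑ i, ∑ ω : Fin n → Fin m, w ω * ((max (vals i (ω i) - T) 0) *
          (if ((Finset.univ.erase i).filter fun j => T < vals j (ω j)).card < k
            then (1 : ℝ) else 0)) := Finset.sum_comm
    rw [hfirst, hswap]
    have hsecond : (1 / 2) * ∑ i, E i ≤
        ∑ i, ∑ ω : Fin n → Fin m, w ω * ((max (vals i (ω i) - T) 0) *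
          (if ((Finset.univ.erase i).filter fun j => T < vals j (ω j)).card < k
            then (1 : ℝ) else 0)) := by
      rw [Finset.mul_sum]
      refine Finset.sum_le_sum fun i _ => ?_
      set g : (Fin n → Fin m) → ℝ := fun ω =>
        if ((Finset.univ.erase i).filter fun j => T < vals j (ω j)).card < k
          then (1 : ℝ) else 0 with hgdef
      have hg : ∀ (ω : Fin n → Fin m) (a : Fin m), g (Function.update ω i a) = g ω := by
        intro ω a
        have : ((Finset.univ.erase i).filter
              fun j => T < vals j (Function.update ω i a j))
            = ((Finset.univ.erase i).filter fun j => T < vals j (ω j)) := by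
          refine Finset.filter_congr fun j hj => ?_
          rw [Finset.mem_erase] at hj
          rw [Function.update_of_ne hj.1]
        simp only [hgdef, this]
      have hfac := factor ν hν1 i (fun a => max (vals i a - T) 0) g hg
      rw [← hfac]
      have hgge : 1 / 2 ≤ ∑ ω : Fin n → Fin m, w ω * g ω := by
        rw [← hhalf]
        refine Finset.sum_le_sum fun ω _ => ?_
        refine mul_le_mul_of_nonneg_left ?_ (hw0 ω)
        by_cases hc : ((Finset.univ : Finset (Fin n)).filter
            fun j => T < vals j (ω j)).card < k
        · rw [if_pos hc]
          have hc' : ((Finset.univ.erase i).filter fun j => T < vals j (ω j)).card < k := by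
            rw [Finset.filter_erase]
            exact lt_of_le_of_lt (Finset.card_le_card (Finset.erase_subset _ _)) hc
          simp [hgdef, hc']
        · rw [if_neg hc]
          simp only [hgdef]
          by_cases hc' : ((Finset.univ.erase i).filter fun j => T < vals j (ω j)).card < k
          · rw [if_pos hc']; norm_num
          · rw [if_neg hc']
      calc (1 / 2) * E i = E i * (1 / 2) := by ring
        _ ≤ E i * (∑ ω : Fin n → Fin m, w ω * g ω) :=
            mul_le_mul_of_nonneg_left hgge (hE0 i)
        _ = (∑ a, ν i a * max (vals i a - T) 0) * (∑ ω : Fin n → Fin m, w ω * g ω) := rfl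
    linarith
  linarith
end

section
/- Let X_1, …, X_n be independent nonnegative random variables, let OPT = E[max_{S : |S| ≤ k} ∑_{i∈S} X_i], and set the static threshold T = OPT/(2k). The online algorithm that accepts item i iff X_i > T and fewer than k items have been accepted achieves expected value at least OPT/2. -/
lemma list_sum_max_nonneg (T : ℝ) (xs : List ℝ) :
    0 ≤ (xs.map fun x => max (x - T) 0).sum := by
  apply List.sum_nonneg
  intro y hy
  simp only [List.mem_map] at hy
  obtain ⟨a, -, rfl⟩ := hy
  exact le_max_right _ _

lemma fold_bound (T : ℝ) (k : ℕ) (xs : List ℝ) : ∀ (c : ℕ) (v : ℝ), c ≤ k →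
    v + T * ((min (xs.countP fun x => decide (T < x)) (k - c) : ℕ) : ℝ)
      + (if xs.countP (fun x => decide (T < x)) ≤ k - c
          then (xs.map fun x => max (x - T) 0).sum else 0)
      ≤ (xs.foldl (algStep T k) (c, v)).2 := by
  induction xs with
  | nil => intro c v hc; simp
  | cons x xs ih =>
    intro c v hc
    rw [List.foldl_cons]
    by_cases hx : T < x
    · have hcnt : (x :: xs).countP (fun x => decide (T < x))
          = xs.countP (fun x => decide (T < x)) + 1 := by
        simp [List.countP_cons, hx]
      by_cases hck : c < k
      · have hstep : algStep T k (c, v) x = (c + 1, v + x) := by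
          simp [algStep, hx, hck]
        rw [hstep]
        refine le_trans ?_ (ih (c+1) (v + x) hck)
        have hsub : k - c = (k - (c+1)) + 1 := by omega
        rw [hcnt, hsub, Nat.succ_min_succ]
        simp only [List.map_cons, List.sum_cons, Nat.add_le_add_iff_right]
        have hmax : max (x - T) 0 = x - T := max_eq_left (by linarith)
        push_cast
        split_ifs with h
        · rw [hmax]; ring_nf; linarith
        · linarith
      · have hstep : algStep T k (c, v) x = (c, v) := by
          simp [algStep, hck]
        rw [hstep]
        have hkc : k - c = 0 := by omega
        rw [hcnt, hkc]
        simp only [Nat.min_zero, Nat.cast_zero, mul_zero, add_zero, Nat.add_le_add_iff_right]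
        have h2 := ih c v hc
        rw [hkc] at h2
        simp only [Nat.min_zero, Nat.cast_zero, mul_zero, add_zero, Nat.le_zero] at h2
        have : (if xs.countP (fun x => decide (T < x)) + 1 ≤ 0 then
            ((x :: xs).map fun x => max (x - T) 0).sum else 0) = 0 := by
          simp
        rw [this, add_zero]
        refine le_trans ?_ h2
        split_ifs with h
        · exact le_add_of_nonneg_right (list_sum_max_nonneg T xs)
        · linarith
    · have hstep : algStep T k (c, v) x = (c, v) := by
        simp [algStep, hx]
      rw [hstep]
      have hcnt : (x :: xs).countP (fun x => decide (T < x))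
          = xs.countP (fun x => decide (T < x)) := by
        simp [List.countP_cons, hx]
      have hmax : max (x - T) 0 = 0 := max_eq_right (by linarith)
      rw [hcnt]
      simp only [List.map_cons, List.sum_cons, hmax, zero_add]
      exact ih c v hc

lemma countP_ofFn {n : ℕ} (x : Fin n → ℝ) (p : ℝ → Bool) :
    (List.ofFn x).countP p = (Finset.univ.filter fun i => p (x i)).card := by
  induction n with
  | zero => simp
  | succ n ih =>
    rw [List.ofFn_succ, List.countP_cons, ih, Finset.card_filter, Finset.card_filter,
      Fin.sum_univ_succ]
    simp [Function.comp, add_comm]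

lemma algValue_bound (T : ℝ) (k : ℕ) {n : ℕ} (x : Fin n → ℝ) :
    T * ((min (Finset.univ.filter fun i => T < x i).card k : ℕ) : ℝ)
      + (if (Finset.univ.filter fun i => T < x i).card ≤ k
          then ∑ i, max (x i - T) 0 else 0)
      ≤ algValue T k (List.ofFn x) := by
  have h := fold_bound T k (List.ofFn x) 0 0 (Nat.zero_le k)
  rw [Nat.sub_zero] at h
  have hcnt : ((List.ofFn x).countP fun y => decide (T < y))
      = (Finset.univ.filter fun i => T < x i).card := by
    rw [countP_ofFn]
    simp
  have hsum : ((List.ofFn x).map fun y => max (y - T) 0).sum = ∑ i, max (x i - T) 0 := by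
    rw [List.map_ofFn, List.sum_ofFn]
    rfl
  rw [hcnt, hsum, zero_add] at h
  exact h

lemma indep {n m : ℕ} (ν : Fin n → Fin m → ℝ) (i : Fin n)
    (hν : ∑ a, ν i a = 1)
    (f : Fin m → ℝ) (g : (Fin n → Fin m) → ℝ)
    (hg : ∀ ω a, g (Function.update ω i a) = g ω) :
    ∑ ω : Fin n → Fin m, (∏ j, ν j (ω j)) * (f (ω i) * g ω)
      = (∑ a, ν i a * f a) * ∑ ω : Fin n → Fin m, (∏ j, ν j (ω j)) * g ω := by
  cases isEmpty_or_nonempty (Fin m) with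
  | inl hE =>
    haveI : IsEmpty (Fin n → Fin m) := ⟨fun ω => IsEmpty.false (ω i)⟩
    simp
  | inr hNE =>
    classical
    set e := Equiv.piSplitAt i (fun _ : Fin n => Fin m) with he
    set σ : Fin m → ({j : Fin n // j ≠ i} → Fin m) → (Fin n → Fin m) :=
      fun a ρ => e.symm (a, ρ) with hσ
    have ha : ∀ a ρ, σ a ρ i = a := by
      intro a ρ
      simp [hσ, he, Equiv.piSplitAt]
    have hne : ∀ a ρ (j : Fin n) (h : j ≠ i), σ a ρ j = ρ ⟨j, h⟩ := by
      intro a ρ j h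
      simp [hσ, he, Equiv.piSplitAt, h]
    set a₀ : Fin m := Classical.arbitrary (Fin m)
    have hupd : ∀ a ρ, σ a ρ = Function.update (σ a₀ ρ) i a := by
      intro a ρ
      funext j
      by_cases h : j = i
      · subst h; rw [Function.update_self, ha]
      · rw [Function.update_of_ne h, hne a ρ j h, hne a₀ ρ j h]
    have hgσ : ∀ a ρ, g (σ a ρ) = g (σ a₀ ρ) := by
      intro a ρ; rw [hupd a ρ, hg]
    have hw : ∀ a ρ, (∏ j, ν j (σ a ρ j)) = ν i a * ∏ j : {j : Fin n // j ≠ i}, ν j (ρ j) := by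
      intro a ρ
      rw [← Finset.mul_prod_erase Finset.univ _ (Finset.mem_univ i), ha]
      congr 1
      rw [Finset.prod_subtype (Finset.univ.erase i) (p := fun j : Fin n => j ≠ i)
        (fun j => by simp [Finset.mem_erase]) (fun j => ν j (σ a ρ j))]
      exact Finset.prod_congr rfl (fun j _ => by rw [hne a ρ j j.2])
    have hsplit : ∀ F : (Fin n → Fin m) → ℝ,
        ∑ ω : Fin n → Fin m, F ω
          = ∑ a : Fin m, ∑ ρ : {j : Fin n // j ≠ i} → Fin m, F (σ a ρ) := by
      intro F
      rw [Fintype.sum_equiv e F (fun q => F (e.symm q)) (fun ω => by simp)]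
      exact Fintype.sum_prod_type _
    rw [hsplit, hsplit (fun ω => (∏ j, ν j (ω j)) * g ω)]
    have hL : ∀ a, ∑ ρ : {j : Fin n // j ≠ i} → Fin m,
        (∏ j, ν j (σ a ρ j)) * (f (σ a ρ i) * g (σ a ρ))
        = (ν i a * f a) * ∑ ρ : {j : Fin n // j ≠ i} → Fin m,
            (∏ j : {j : Fin n // j ≠ i}, ν j (ρ j)) * g (σ a₀ ρ) := by
      intro a
      rw [Finset.mul_sum]
      refine Finset.sum_congr rfl (fun ρ _ => ?_)
      rw [hw, ha, hgσ]
      ring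
    have hR : ∀ a, ∑ ρ : {j : Fin n // j ≠ i} → Fin m,
        (∏ j, ν j (σ a ρ j)) * g (σ a ρ)
        = ν i a * ∑ ρ : {j : Fin n // j ≠ i} → Fin m,
            (∏ j : {j : Fin n // j ≠ i}, ν j (ρ j)) * g (σ a₀ ρ) := by
      intro a
      rw [Finset.mul_sum]
      refine Finset.sum_congr rfl (fun ρ _ => ?_)
      rw [hw, hgσ]
      ring
    simp only [hL, hR]
    rw [← Finset.sum_mul, ← Finset.sum_mul, hν, one_mul]

set_option maxHeartbeats 1000000 in
/-- "Threshold as constant fraction of the prophet" for the `k`-uniform matroid: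
with independent nonnegative `X_i` (finitely supported, product measure encoding) and
`OPT = E[max_{|S| ≤ k} ∑_{i∈S} X_i]`, the static threshold `T = OPT/(2k)` guarantees the
online algorithm expected value at least `OPT/2`. -/
theorem stmt_11 {n m : ℕ} (k : ℕ) (hk : 0 < k)
    (vals : Fin n → Fin m → ℝ) (hvals : ∀ i a, 0 ≤ vals i a)
    (ν : Fin n → Fin m → ℝ) (hν0 : ∀ i a, 0 ≤ ν i a) (hν1 : ∀ i, ∑ a, ν i a = 1)
    (OPT : ℝ)
    (hOPT : OPT = ∑ ω : Fin n → Fin m,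
        (∏ i, ν i (ω i)) * prophetValue k (fun i => vals i (ω i))) :
    OPT / 2 ≤ ∑ ω : Fin n → Fin m, (∏ i, ν i (ω i)) *
        algValue (OPT / (2 * k)) k (List.ofFn fun i => vals i (ω i)) := by
  classical
  set T : ℝ := OPT / (2 * k) with hT
  have hw0 : ∀ ω : Fin n → Fin m, 0 ≤ ∏ j, ν j (ω j) :=
    fun ω => Finset.prod_nonneg fun j _ => hν0 j (ω j)
  have hw1 : ∑ ω : Fin n → Fin m, ∏ j, ν j (ω j) = 1 := by
    rw [← Fintype.prod_sum]
    simp [hν1]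
  have hP0 : ∀ (x : Fin n → ℝ), 0 ≤ prophetValue k x := by
    intro x
    have h₀ : (∅ : Finset (Fin n)) ∈
        ((Finset.univ : Finset (Fin n)).powerset.filter fun S => S.card ≤ k) := by simp
    have := Finset.le_sup' (f := fun S => ∑ i ∈ S, x i) h₀
    simpa [prophetValue] using this
  have hOPT0 : 0 ≤ OPT := by
    rw [hOPT]
    exact Finset.sum_nonneg fun ω _ => mul_nonneg (hw0 ω) (hP0 _)
  have hk' : (0:ℝ) < k := by exact_mod_cast hk
  have hT0 : 0 ≤ T := by
    rw [hT]; positivity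
  have hkT : (k:ℝ) * T = OPT / 2 := by
    rw [hT]; field_simp
  set N : (Fin n → Fin m) → ℕ :=
    fun ω => (Finset.univ.filter fun j => T < vals j (ω j)).card with hN
  set Ni : Fin n → (Fin n → Fin m) → ℕ :=
    fun i ω => (Finset.univ.filter fun j => j ≠ i ∧ T < vals j (ω j)).card with hNidef
  have hNN : ∀ (i : Fin n) ω, N ω = Ni i ω + (if T < vals i (ω i) then 1 else 0) := by
    intro i ω
    simp only [hN, hNidef]
    rw [Finset.card_filter, Finset.card_filter,
      ← Finset.add_sum_erase _ (fun j => if T < vals j (ω j) then 1 else 0) (Finset.mem_univ i),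
      ← Finset.add_sum_erase _ (fun j => if j ≠ i ∧ T < vals j (ω j) then 1 else 0)
        (Finset.mem_univ i)]
    have h1 : ∀ j ∈ Finset.univ.erase i,
        (if T < vals j (ω j) then 1 else 0) = (if j ≠ i ∧ T < vals j (ω j) then 1 else 0) := by
      intro j hj
      have hji := (Finset.mem_erase.mp hj).1
      simp [hji]
    rw [Finset.sum_congr rfl h1]
    simp [add_comm]
  have hNiN : ∀ (i : Fin n) ω, Ni i ω ≤ N ω := by
    intro i ω
    have := hNN i ω
    omega
  -- pointwise bound
  have hpt : ∀ ω : Fin n → Fin m,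
      T * ((min (N ω) k : ℕ) : ℝ)
        + ∑ i, (if Ni i ω < k then max (vals i (ω i) - T) 0 else 0)
      ≤ algValue T k (List.ofFn fun i => vals i (ω i)) := by
    intro ω
    have hA := algValue_bound T k (fun i => vals i (ω i))
    have hNe : (Finset.univ.filter fun i => T < (fun i => vals i (ω i)) i).card = N ω := by
      simp only [hN]
    rw [hNe] at hA
    refine le_trans (le_of_eq ?_) hA
    congr 1
    by_cases hNk : N ω ≤ k
    · rw [if_pos hNk]
      refine Finset.sum_congr rfl (fun i _ => ?_)
      by_cases hxi : T < vals i (ω i)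
      · have h := hNN i ω
        rw [if_pos hxi] at h
        rw [if_pos (by omega : Ni i ω < k)]
      · have hmax : max (vals i (ω i) - T) 0 = 0 := max_eq_right (by linarith)
        rw [hmax]
        simp
    · rw [if_neg hNk]
      refine (Finset.sum_eq_zero fun i _ => ?_)
      by_cases hxi : T < vals i (ω i)
      · have h := hNN i ω
        rw [if_pos hxi] at h
        rw [if_neg (by omega : ¬ Ni i ω < k)]
      · have hmax : max (vals i (ω i) - T) 0 = 0 := max_eq_right (by linarith)
        rw [hmax]
        simp
  -- probabilistic quantities
  set p : ℝ := ∑ ω : Fin n → Fin m, (∏ j, ν j (ω j)) * (if N ω < k then 1 else 0) with hpdef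
  have hp0 : 0 ≤ p := Finset.sum_nonneg fun ω _ =>
    mul_nonneg (hw0 ω) (by split <;> norm_num)
  have hp1 : p ≤ 1 := by
    rw [hpdef]
    calc ∑ ω : Fin n → Fin m, (∏ j, ν j (ω j)) * (if N ω < k then 1 else 0)
        ≤ ∑ ω : Fin n → Fin m, ∏ j, ν j (ω j) :=
          Finset.sum_le_sum fun ω _ =>
            mul_le_of_le_one_right (hw0 ω) (by split <;> norm_num)
      _ = 1 := hw1
  have hEi0 : ∀ i, (0:ℝ) ≤ ∑ a, ν i a * max (vals i a - T) 0 := fun i =>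
    Finset.sum_nonneg fun a _ => mul_nonneg (hν0 i a) (le_max_right _ _)
  have hPip : ∀ i, p ≤ ∑ ω : Fin n → Fin m,
      (∏ j, ν j (ω j)) * (if Ni i ω < k then 1 else 0) := by
    intro i
    refine Finset.sum_le_sum fun ω _ => mul_le_mul_of_nonneg_left ?_ (hw0 ω)
    have hle := hNiN i ω
    split_ifs with h1 h2
    · exact le_refl _
    · exact absurd (lt_of_le_of_lt hle h1) h2
    · norm_num
    · exact le_refl _
  -- independence applications
  have hcross : ∀ i, ∑ ω : Fin n → Fin m,
      (∏ j, ν j (ω j)) * ((if Ni i ω < k then (1:ℝ) else 0) * max (vals i (ω i) - T) 0)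
      = (∑ a, ν i a * max (vals i a - T) 0) *
        ∑ ω : Fin n → Fin m, (∏ j, ν j (ω j)) * (if Ni i ω < k then 1 else 0) := by
    intro i
    have hNiupd : ∀ ω a, Ni i (Function.update ω i a) = Ni i ω := by
      intro ω a
      simp only [hNidef]
      congr 1
      apply Finset.filter_congr
      intro j _
      by_cases h : j = i
      · simp [h]
      · simp [h, Function.update_of_ne h]
    have h := indep ν i (hν1 i) (fun a => max (vals i a - T) 0)
      (fun ω => if Ni i ω < k then (1:ℝ) else 0)
      (fun ω a => by
        show (if Ni i (Function.update ω i a) < k then (1:ℝ) else 0) = _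
        rw [hNiupd])
    rw [← h]
    exact Finset.sum_congr rfl fun ω _ => by ring
  have hmarg : ∀ (i : Fin n) (f : Fin m → ℝ),
      ∑ ω : Fin n → Fin m, (∏ j, ν j (ω j)) * f (ω i) = ∑ a, ν i a * f a := by
    intro i f
    have h := indep ν i (hν1 i) f (fun _ => (1:ℝ)) (fun ω a => rfl)
    simp only [mul_one] at h
    rw [h, hw1, mul_one]
  have hEsum : ∑ ω : Fin n → Fin m, (∏ j, ν j (ω j)) * (∑ i, max (vals i (ω i) - T) 0)
      = ∑ i, ∑ a, ν i a * max (vals i a - T) 0 := by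
    calc ∑ ω : Fin n → Fin m, (∏ j, ν j (ω j)) * (∑ i, max (vals i (ω i) - T) 0)
        = ∑ ω : Fin n → Fin m, ∑ i, (∏ j, ν j (ω j)) * max (vals i (ω i) - T) 0 :=
          Finset.sum_congr rfl fun ω _ => Finset.mul_sum _ _ _
      _ = ∑ i, ∑ ω : Fin n → Fin m, (∏ j, ν j (ω j)) * max (vals i (ω i) - T) 0 :=
          Finset.sum_comm
      _ = ∑ i, ∑ a, ν i a * max (vals i a - T) 0 :=
          Finset.sum_congr rfl fun i _ => hmarg i (fun a => max (vals i a - T) 0)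
  have hProph : ∀ ω : Fin n → Fin m,
      prophetValue k (fun i => vals i (ω i)) ≤ (∑ i, max (vals i (ω i) - T) 0) + k * T := by
    intro ω
    refine Finset.sup'_le _ _ fun S hS => ?_
    have hcard : S.card ≤ k := (Finset.mem_filter.mp hS).2
    calc ∑ i ∈ S, vals i (ω i)
        ≤ ∑ i ∈ S, (max (vals i (ω i) - T) 0 + T) := by
          refine Finset.sum_le_sum fun i _ => ?_
          have := le_max_left (vals i (ω i) - T) 0
          linarith
      _ = (∑ i ∈ S, max (vals i (ω i) - T) 0) + S.card * T := by
          rw [Finset.sum_add_distrib, Finset.sum_const, nsmul_eq_mul]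
      _ ≤ (∑ i, max (vals i (ω i) - T) 0) + k * T := by
          refine add_le_add ?_ ?_
          · exact Finset.sum_le_sum_of_subset_of_nonneg (Finset.subset_univ S)
              (fun i _ _ => le_max_right _ _)
          · exact mul_le_mul_of_nonneg_right (by exact_mod_cast hcard) hT0
  have hSigma : OPT - (k:ℝ) * T ≤ ∑ i, ∑ a, ν i a * max (vals i a - T) 0 := by
    rw [← hEsum]
    have h1 : OPT ≤ ∑ ω : Fin n → Fin m,
        (∏ j, ν j (ω j)) * ((∑ i, max (vals i (ω i) - T) 0) + k * T) := by
      rw [hOPT]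
      exact Finset.sum_le_sum fun ω _ => mul_le_mul_of_nonneg_left (hProph ω) (hw0 ω)
    have h2 : ∑ ω : Fin n → Fin m,
        (∏ j, ν j (ω j)) * ((∑ i, max (vals i (ω i) - T) 0) + k * T)
        = (∑ ω : Fin n → Fin m, (∏ j, ν j (ω j)) * (∑ i, max (vals i (ω i) - T) 0))
          + k * T := by
      have e : ∀ ω : Fin n → Fin m,
          (∏ j, ν j (ω j)) * ((∑ i, max (vals i (ω i) - T) 0) + (k:ℝ) * T)
          = (∏ j, ν j (ω j)) * (∑ i, max (vals i (ω i) - T) 0)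
            + (k:ℝ) * T * (∏ j, ν j (ω j)) := fun ω => by ring
      rw [Finset.sum_congr rfl fun ω _ => e ω, Finset.sum_add_distrib, ← Finset.mul_sum,
        hw1, mul_one]
    linarith [h1, h2.le, h2.ge]
  have hmin : (k:ℝ) * (1 - p) ≤ ∑ ω : Fin n → Fin m,
      (∏ j, ν j (ω j)) * ((min (N ω) k : ℕ) : ℝ) := by
    have hptw : ∀ ω : Fin n → Fin m,
        (∏ j, ν j (ω j)) * ((k:ℝ) * (1 - if N ω < k then 1 else 0))
          ≤ (∏ j, ν j (ω j)) * ((min (N ω) k : ℕ) : ℝ) := by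
      intro ω
      refine mul_le_mul_of_nonneg_left ?_ (hw0 ω)
      split_ifs with h
      · rw [sub_self, mul_zero]
        exact Nat.cast_nonneg _
      · have he : min (N ω) k = k := min_eq_right (by omega)
        rw [he, sub_zero, mul_one]
    have hexp : ∑ ω : Fin n → Fin m,
        (∏ j, ν j (ω j)) * ((k:ℝ) * (1 - if N ω < k then 1 else 0))
        = (k:ℝ) * (1 - p) := by
      have e : ∀ ω : Fin n → Fin m,
          (∏ j, ν j (ω j)) * ((k:ℝ) * (1 - if N ω < k then 1 else 0))
          = (k:ℝ) * (∏ j, ν j (ω j))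
            - (k:ℝ) * ((∏ j, ν j (ω j)) * (if N ω < k then 1 else 0)) := fun ω => by ring
      rw [Finset.sum_congr rfl fun ω _ => e ω, Finset.sum_sub_distrib,
        ← Finset.mul_sum, ← Finset.mul_sum, hw1, hpdef]
      ring
    calc (k:ℝ) * (1 - p) = _ := hexp.symm
      _ ≤ _ := Finset.sum_le_sum fun ω _ => hptw ω
  -- final chain
  have main : T * (k * (1 - p)) + p * (OPT - k * T)
      ≤ ∑ ω : Fin n → Fin m, (∏ j, ν j (ω j)) *
        algValue T k (List.ofFn fun i => vals i (ω i)) := by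
    have step1 : ∑ ω : Fin n → Fin m, (∏ j, ν j (ω j)) * (T * ((min (N ω) k : ℕ) : ℝ)
          + ∑ i, (if Ni i ω < k then max (vals i (ω i) - T) 0 else 0))
        ≤ ∑ ω : Fin n → Fin m, (∏ j, ν j (ω j)) *
          algValue T k (List.ofFn fun i => vals i (ω i)) :=
      Finset.sum_le_sum fun ω _ => mul_le_mul_of_nonneg_left (hpt ω) (hw0 ω)
    have split : ∑ ω : Fin n → Fin m, (∏ j, ν j (ω j)) * (T * ((min (N ω) k : ℕ) : ℝ)
          + ∑ i, (if Ni i ω < k then max (vals i (ω i) - T) 0 else 0))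
        = T * (∑ ω : Fin n → Fin m, (∏ j, ν j (ω j)) * ((min (N ω) k : ℕ) : ℝ))
          + ∑ i, (∑ a, ν i a * max (vals i a - T) 0) *
              ∑ ω : Fin n → Fin m, (∏ j, ν j (ω j)) * (if Ni i ω < k then 1 else 0) := by
      have expand : ∀ ω : Fin n → Fin m, (∏ j, ν j (ω j)) * (T * ((min (N ω) k : ℕ) : ℝ)
            + ∑ i, (if Ni i ω < k then max (vals i (ω i) - T) 0 else 0))
          = T * ((∏ j, ν j (ω j)) * ((min (N ω) k : ℕ) : ℝ))
            + ∑ i, (∏ j, ν j (ω j)) *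
                ((if Ni i ω < k then (1:ℝ) else 0) * max (vals i (ω i) - T) 0) := by
        intro ω
        rw [mul_add, Finset.mul_sum]
        congr 1
        · ring
        · refine Finset.sum_congr rfl fun i _ => ?_
          split_ifs <;> ring
      rw [Finset.sum_congr rfl fun ω _ => expand ω, Finset.sum_add_distrib, ← Finset.mul_sum,
        Finset.sum_comm]
      congr 1
      exact Finset.sum_congr rfl fun i _ => hcross i
    have bound2 : p * (OPT - k * T) ≤ ∑ i, (∑ a, ν i a * max (vals i a - T) 0) *
        ∑ ω : Fin n → Fin m, (∏ j, ν j (ω j)) * (if Ni i ω < k then 1 else 0) := by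
      have h2 : (OPT - k*T) * p ≤ (∑ i, ∑ a, ν i a * max (vals i a - T) 0) * p :=
        mul_le_mul_of_nonneg_right hSigma hp0
      calc p * (OPT - k*T) = (OPT - k*T) * p := by ring
        _ ≤ (∑ i, ∑ a, ν i a * max (vals i a - T) 0) * p := h2
        _ = ∑ i, (∑ a, ν i a * max (vals i a - T) 0) * p := by rw [Finset.sum_mul]
        _ ≤ _ := Finset.sum_le_sum fun i _ =>
            mul_le_mul_of_nonneg_left (hPip i) (hEi0 i)
    have bound1 : T * (k * (1 - p))
        ≤ T * (∑ ω : Fin n → Fin m, (∏ j, ν j (ω j)) * ((min (N ω) k : ℕ) : ℝ)) :=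
      mul_le_mul_of_nonneg_left hmin hT0
    calc T * (k * (1 - p)) + p * (OPT - k * T)
        ≤ T * (∑ ω : Fin n → Fin m, (∏ j, ν j (ω j)) * ((min (N ω) k : ℕ) : ℝ))
          + ∑ i, (∑ a, ν i a * max (vals i a - T) 0) *
              ∑ ω : Fin n → Fin m, (∏ j, ν j (ω j)) * (if Ni i ω < k then 1 else 0) :=
          add_le_add bound1 bound2
      _ = _ := split.symm
      _ ≤ _ := step1
  have hfinal : OPT / 2 = T * (k * (1 - p)) + p * (OPT - k * T) := by
    linear_combination (2*p - 1) * hkT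
  rw [hfinal]
  exact main
end

section
/- Let X_1, …, X_n be nonnegative random variables accepted one at a time under a matroid constraint, and let X'_i be the coupled Bernoulli variables where X'_i = t_i iff X_i ≥ F_i⁻¹(1 − p_i) and X'_i = 0 otherwise, with t_i = E[X_i | X_i ≥ F_i⁻¹(1−p_i)] ≥ F_i⁻¹(1−p_i). Then for any fixed threshold algorithm with thresholds T_i ∈ {t_i, ∞} run on both coupled instances (in the same arrival order), the set of items accepted is the same, and the expected value of the algorithm on X is at least its expected value on X'. -/
open scoped Classical

/-- The greedy fixed-threshold algorithm: items arrive in the order of the list `order`;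
an item is accepted iff it passes its threshold (`pass i`) and the accepted set stays
independent (`Ind`). -/
noncomputable def greedyAccept {N : Type*} [DecidableEq N]
    (Ind : Finset N → Prop) (pass : N → Prop) (order : List N) : Finset N :=
  order.foldl (fun A i => if pass i ∧ Ind (insert i A) then insert i A else A) ∅

lemma greedyAccept_congr {N : Type*} [DecidableEq N]
    (Ind : Finset N → Prop) (p1 p2 : N → Prop) (order : List N)
    (h : ∀ i, p1 i ↔ p2 i) :
    greedyAccept Ind p1 order = greedyAccept Ind p2 order := by
  have hp : p1 = p2 := funext fun i => propext (h i)
  rw [greedyAccept, greedyAccept, hp]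

lemma greedyAccept_mem_aux {N : Type*} [DecidableEq N]
    (Ind : Finset N → Prop) (pass : N → Prop) (order : List N) (A : Finset N) (i : N)
    (h : i ∈ order.foldl
      (fun A i => if pass i ∧ Ind (insert i A) then insert i A else A) A) :
    i ∈ A ∨ pass i := by
  induction order generalizing A with
  | nil => exact Or.inl h
  | cons a l ih =>
    simp only [List.foldl_cons] at h
    rcases ih _ h with h' | hp
    · by_cases hc : pass a ∧ Ind (insert a A)
      · rw [if_pos hc] at h'
        rcases Finset.mem_insert.1 h' with rfl | h''
        · exact Or.inr hc.1
        · exact Or.inl h''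
      · rw [if_neg hc] at h'; exact Or.inl h'
    · exact Or.inr hp

lemma greedyAccept_pass {N : Type*} [DecidableEq N]
    (Ind : Finset N → Prop) (pass : N → Prop) (order : List N) (i : N)
    (h : i ∈ greedyAccept Ind pass order) : pass i := by
  rcases greedyAccept_mem_aux Ind pass order ∅ i h with h' | hp
  · exact absurd h' (Finset.notMem_empty i)
  · exact hp

/-- Coupling lemma.  `X i` has finitely many values (`vals i`, masses `ν i`, product measure
on `N → Fin m` encoding independence).  Let `q i = F_i⁻¹(1 - p_i)` be the quantile threshold,
`t i = E[X i | X i ≥ q i] ≥ q i` (with `t i > 0`), and let the coupled Bernoulli variable be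
`X' i = t i` iff `X i ≥ q i`, else `0`.  For a fixed-threshold algorithm with thresholds
`T i ∈ {t i, ∞}` — encoded by the set `C = {i : T i = t i}` of considered items — run on both
coupled instances in the same arrival order: the accepted set is the same in both instances,
and the expected value of the algorithm on `X` is at least its expected value on `X'`. -/
theorem stmt_12 {N : Type*} [Fintype N] [DecidableEq N] {m : ℕ}
    (Ind : Finset N → Prop)
    (vals : N → Fin m → ℝ) (hvals : ∀ i a, 0 ≤ vals i a)
    (ν : N → Fin m → ℝ) (hν0 : ∀ i a, 0 ≤ ν i a) (hν1 : ∀ i, ∑ a, ν i a = 1)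
    (q t : N → ℝ) (htpos : ∀ i, 0 < t i) (htq : ∀ i, q i ≤ t i)
    (ht : ∀ i, t i * (∑ a ∈ Finset.univ.filter fun a => q i ≤ vals i a, ν i a)
        = ∑ a ∈ Finset.univ.filter fun a => q i ≤ vals i a, ν i a * vals i a)
    (C : Finset N) (order : List N) (horder : order.Nodup) :
    (∀ ω : N → Fin m,
      greedyAccept Ind
          (fun i => i ∈ C ∧ t i ≤ (if q i ≤ vals i (ω i) then t i else 0)) order
        = greedyAccept Ind (fun i => i ∈ C ∧ q i ≤ vals i (ω i)) order)
    ∧ (∑ ω : N → Fin m, (∏ i, ν i (ω i)) *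
          ∑ i ∈ greedyAccept Ind (fun i => i ∈ C ∧ q i ≤ vals i (ω i)) order,
            (if q i ≤ vals i (ω i) then t i else 0)
        ≤ ∑ ω : N → Fin m, (∏ i, ν i (ω i)) *
            ∑ i ∈ greedyAccept Ind (fun i => i ∈ C ∧ q i ≤ vals i (ω i)) order,
              vals i (ω i)) := by
  -- Abbreviations
  set A : (N → Fin m) → Finset N :=
    fun ω => greedyAccept Ind (fun i => i ∈ C ∧ q i ≤ vals i (ω i)) order with hA
  constructor
  · -- Part 1: the pass predicates coincide under the coupling.
    intro ω
    apply greedyAccept_congr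
    intro i
    constructor
    · rintro ⟨hC, hle⟩
      refine ⟨hC, ?_⟩
      by_contra hq
      rw [if_neg hq] at hle
      exact (htpos i).not_ge hle
    · rintro ⟨hC, hq⟩
      exact ⟨hC, by rw [if_pos hq]⟩
  · -- Part 2: the expected values are in fact equal.
    -- weight function
    have hw : ∀ (i : N) (ω : N → Fin m) (a : Fin m),
        ν i a * ∏ j, ν j (ω j)
          = ν i (ω i) * ∏ j, ν j (Function.update ω i a j) := by
      intro i ω a
      have h1 : ∏ j, ν j (ω j) = ν i (ω i) * ∏ j ∈ {i}ᶜ, ν j (ω j) :=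
        Fintype.prod_eq_mul_prod_compl i _
      have h2 : ∏ j, ν j (Function.update ω i a j)
          = ν i a * ∏ j ∈ {i}ᶜ, ν j (ω j) := by
        rw [Fintype.prod_eq_mul_prod_compl i]
        congr 1
        · rw [Function.update_self]
        · refine Finset.prod_congr rfl fun j hj => ?_
          rw [Function.update_of_ne
            (Finset.notMem_singleton.1 (Finset.mem_compl.1 hj))]
      rw [h1, h2]; ring
    -- key resummation lemma (one-coordinate conditioning)
    have hkey : ∀ (i : N) (h : (N → Fin m) → ℝ),
        ∑ ω, (∏ j, ν j (ω j)) * h ω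
          = ∑ ω, ∑ a, ν i a * ((∏ j, ν j (ω j)) * h (Function.update ω i a)) := by
      intro i h
      have hσ : Function.Involutive
          (fun p : (N → Fin m) × Fin m => (Function.update p.1 i p.2, p.1 i)) := by
        intro p
        simp [Function.update_idem]
      calc ∑ ω, (∏ j, ν j (ω j)) * h ω
          = ∑ ω, ∑ a, ν i a * ((∏ j, ν j (ω j)) * h ω) := by
            refine Finset.sum_congr rfl fun ω _ => ?_
            rw [← Finset.sum_mul, hν1 i, one_mul]
        _ = ∑ p : (N → Fin m) × Fin m, ν i p.2 * ((∏ j, ν j (p.1 j)) * h p.1) := by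
            rw [Fintype.sum_prod_type]
        _ = ∑ p : (N → Fin m) × Fin m,
              ν i p.2 * ((∏ j, ν j (p.1 j)) * h (Function.update p.1 i p.2)) := by
            refine Fintype.sum_bijective _ hσ.bijective _ _ fun p => ?_
            show ν i p.2 * ((∏ j, ν j (p.1 j)) * h p.1)
              = ν i (p.1 i) * ((∏ j, ν j (Function.update p.1 i p.2 j)) *
                  h (Function.update (Function.update p.1 i p.2) i (p.1 i)))
            rw [Function.update_idem, Function.update_eq_self, ← mul_assoc,
              ← mul_assoc, hw i p.1 p.2]
        _ = ∑ ω, ∑ a, ν i a * ((∏ j, ν j (ω j)) * h (Function.update ω i a)) := by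
            rw [Fintype.sum_prod_type]
    -- rewrite both sides as a sum over items first
    have hrw : ∀ (g : N → (N → Fin m) → ℝ),
        (∑ ω, (∏ j, ν j (ω j)) * ∑ i ∈ A ω, g i ω)
          = ∑ i, ∑ ω, (∏ j, ν j (ω j)) * (if i ∈ A ω then g i ω else 0) := by
      intro g
      rw [Finset.sum_comm]
      refine Finset.sum_congr rfl fun ω _ => ?_
      symm
      calc ∑ i, (∏ j, ν j (ω j)) * (if i ∈ A ω then g i ω else 0)
          = ∑ i, (if i ∈ A ω then (∏ j, ν j (ω j)) * g i ω else 0) := by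
            simp [mul_ite]
        _ = ∑ i ∈ Finset.univ ∩ A ω, (∏ j, ν j (ω j)) * g i ω := by
            rw [Finset.sum_ite_mem]
        _ = (∏ j, ν j (ω j)) * ∑ i ∈ A ω, g i ω := by
            rw [Finset.univ_inter, Finset.mul_sum]
    rw [hrw (fun i ω => if q i ≤ vals i (ω i) then t i else 0),
      hrw (fun i ω => vals i (ω i))]
    refine le_of_eq (Finset.sum_congr rfl fun i _ => ?_)
    rw [hkey i, hkey i]
    refine Finset.sum_congr rfl fun ω _ => ?_
    -- per-(i, ω) conditional-expectation identity
    have hvan : ∀ a : Fin m, i ∈ A (Function.update ω i a) → q i ≤ vals i a := by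
      intro a hmem
      have := greedyAccept_pass Ind _ order i hmem
      simpa [Function.update_self] using this.2
    have hconst : ∀ a b : Fin m, q i ≤ vals i a → q i ≤ vals i b →
        A (Function.update ω i a) = A (Function.update ω i b) := by
      intro a b ha hb
      apply greedyAccept_congr
      intro j
      by_cases hji : j = i
      · subst hji; simp [Function.update_self, ha, hb]
      · simp [Function.update_of_ne hji]
    by_cases hex : ∃ a : Fin m, q i ≤ vals i a ∧ i ∈ A (Function.update ω i a)
    · obtain ⟨a₀, ha₀, hm₀⟩ := hex
      have hmem : ∀ a : Fin m, q i ≤ vals i a → i ∈ A (Function.update ω i a) :=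
        fun a ha => (hconst a₀ a ha₀ ha) ▸ hm₀
      have hL : ∑ a, ν i a * ((∏ j, ν j (ω j)) *
            (if i ∈ A (Function.update ω i a) then
              (if q i ≤ vals i ((Function.update ω i a) i) then t i else 0) else 0))
          = ∑ a, (if q i ≤ vals i a then ν i a * ((∏ j, ν j (ω j)) * t i) else 0) := by
        refine Finset.sum_congr rfl fun a _ => ?_
        by_cases ha : q i ≤ vals i a
        · simp [ha, hmem a ha, Function.update_self]
        · have hni : i ∉ A (Function.update ω i a) := fun hm => ha (hvan a hm)
          simp [ha, hni]
      have hR : ∑ a, ν i a * ((∏ j, ν j (ω j)) *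
            (if i ∈ A (Function.update ω i a) then vals i ((Function.update ω i a) i) else 0))
          = ∑ a, (if q i ≤ vals i a then ν i a * ((∏ j, ν j (ω j)) * vals i a) else 0) := by
        refine Finset.sum_congr rfl fun a _ => ?_
        by_cases ha : q i ≤ vals i a
        · simp [ha, hmem a ha, Function.update_self]
        · have hni : i ∉ A (Function.update ω i a) := fun hm => ha (hvan a hm)
          simp [ha, hni]
      rw [hL, hR, ← Finset.sum_filter, ← Finset.sum_filter]
      have h1 : ∑ a ∈ Finset.univ.filter (fun a => q i ≤ vals i a),
            ν i a * ((∏ j, ν j (ω j)) * t i)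
          = (∏ j, ν j (ω j)) *
            (t i * ∑ a ∈ Finset.univ.filter (fun a => q i ≤ vals i a), ν i a) := by
        rw [← Finset.sum_mul]; ring
      have h2 : ∑ a ∈ Finset.univ.filter (fun a => q i ≤ vals i a),
            ν i a * ((∏ j, ν j (ω j)) * vals i a)
          = (∏ j, ν j (ω j)) *
            ∑ a ∈ Finset.univ.filter (fun a => q i ≤ vals i a), ν i a * vals i a := by
        rw [Finset.mul_sum]
        exact Finset.sum_congr rfl fun a _ => by ring
      rw [h1, h2, ht i]
    · push_neg at hex
      have hno : ∀ a : Fin m, i ∉ A (Function.update ω i a) :=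
        fun a hm => hex a (hvan a hm) hm
      simp [hno]
end

section
/- Let G = (V, E) be a graph whose edges have Bernoulli weights: edge e has value t_e ≥ 0 with probability p_e and 0 otherwise, independently, where p ∈ P_G (the graphic matroid polytope). Scale to p' = p/4, direct the graph so that every vertex has fractional in-degree (under p') at most 1/2, pick a uniformly random vertex subset A, and set thresholds T_e = t_e for edges directed from A to V∖A and T_e = ∞ otherwise. The resulting non-adaptive greedy algorithm (accepting an arriving active edge iff it meets its threshold and stays independent in the graphic matroid) obtains expected value at least (1/32) ∑_{e ∈ E} p_e t_e in the worst-case arrival order (edges arriving in increasing order of t_e). -/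
open scoped Classical

/-- The undirected simple graph on `V` whose edges are the underlying undirected edges of
the directed edge set `F`. -/
def dGraph {V : Type*} (F : Finset (V × V)) : SimpleGraph V :=
  SimpleGraph.fromEdgeSet {s | ∃ e ∈ F, s = s(e.1, e.2)}

/-- The non-adaptive greedy forest algorithm: edges arrive in the order of `order`; an
arriving edge is accepted iff it is in the considered set (its threshold is `t e`, not `∞`),
it is active (its value meets the threshold), and its endpoints are not already connected by
accepted edges (so the accepted set stays a forest). -/
noncomputable def greedyForest {V : Type*} [DecidableEq V]
    (consider active : Finset (V × V)) (order : List (V × V)) : Finset (V × V) :=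
  order.foldl (fun F e =>
    if e ∈ consider ∧ e ∈ active ∧ ¬ (dGraph F).Reachable e.1 e.2 then insert e F else F) ∅

section Greedy
variable {V : Type*} [DecidableEq V]

/-- One step of the greedy algorithm. -/
noncomputable def gstep (c a : Finset (V × V)) : Finset (V × V) → V × V → Finset (V × V) :=
  fun F e => if e ∈ c ∧ e ∈ a ∧ ¬ (dGraph F).Reachable e.1 e.2 then insert e F else F

lemma greedyForest_eq (c a : Finset (V × V)) (o : List (V × V)) :
    greedyForest c a o = o.foldl (gstep c a) ∅ := rfl

lemma gstep_subset (c a : Finset (V × V)) (F : Finset (V × V)) (e : V × V) :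
    F ⊆ gstep c a F e := by
  unfold gstep; split
  · exact Finset.subset_insert _ _
  · exact Finset.Subset.refl _

lemma foldl_gstep_subset (c a : Finset (V × V)) (l : List (V × V)) (F : Finset (V × V)) :
    F ⊆ l.foldl (gstep c a) F := by
  induction l generalizing F with
  | nil => simp
  | cons x l ih => exact (gstep_subset c a F x).trans (ih _)

lemma mem_foldl_gstep (c a : Finset (V × V)) (l : List (V × V)) (F : Finset (V × V))
    (x : V × V) (hx : x ∈ l.foldl (gstep c a) F) :
    x ∈ F ∨ (x ∈ c ∧ x ∈ a ∧ x ∈ l) := by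
  induction l generalizing F with
  | nil => exact Or.inl (by simpa using hx)
  | cons y l ih =>
    rcases ih _ hx with h | h
    · unfold gstep at h
      split at h
      · rcases Finset.mem_insert.mp h with rfl | h
        · exact Or.inr ⟨‹_ ∧ _ ∧ _›.1, ‹_ ∧ _ ∧ _›.2.1, List.mem_cons_self⟩
        · exact Or.inl h
      · exact Or.inl h
    · exact Or.inr ⟨h.1, h.2.1, List.mem_cons_of_mem _ h.2.2⟩

lemma walk_exists_adj {G : SimpleGraph V} {u v : V} (pw : G.Walk u v) :
    u ≠ v → ∃ w, G.Adj w v := by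
  induction pw with
  | nil => exact fun h => absurd rfl h
  | @cons x y z h' pw ih =>
    intro _
    by_cases hb : y = z
    · exact ⟨x, hb ▸ h'⟩
    · exact ih hb

lemma mem_greedy (c a : Finset (V × V)) (order : List (V × V)) (hnd : order.Nodup)
    (f : V × V) (hne : f.1 ≠ f.2) (hfo : f ∈ order) (hfc : f ∈ c) (hfa : f ∈ a)
    (h1 : ∀ e ∈ c, e.1 ≠ f.2)
    (h2 : ∀ e ∈ c, e ∈ a → e ≠ f → e.2 ≠ f.2) :
    f ∈ greedyForest c a order := by
  obtain ⟨l₁, l₂, rfl⟩ := List.append_of_mem hfo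
  have hf1 : f ∉ l₁ := by
    have h := List.disjoint_of_nodup_append hnd
    intro hmem
    exact h hmem (List.mem_cons_self)
  rw [greedyForest_eq, List.foldl_append]
  set F₁ := l₁.foldl (gstep c a) ∅ with hF₁def
  have hF₁ : ∀ x ∈ F₁, x ∈ c ∧ x ∈ a ∧ x ∈ l₁ := by
    intro x hx
    rcases mem_foldl_gstep c a l₁ ∅ x hx with h | h
    · simp at h
    · exact h
  rw [List.foldl_cons]
  have hstep : gstep c a F₁ f = insert f F₁ := by
    unfold gstep
    rw [if_pos]
    refine ⟨hfc, hfa, ?_⟩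
    intro hreach
    obtain ⟨pw⟩ := hreach
    obtain ⟨w, hadj⟩ := walk_exists_adj pw hne
    rw [dGraph, SimpleGraph.fromEdgeSet_adj] at hadj
    obtain ⟨⟨e', he'F, hse⟩, hwne⟩ := hadj
    obtain ⟨hec, hea, hel⟩ := hF₁ e' he'F
    have hef : e' ≠ f := fun h => hf1 (h ▸ hel)
    rw [Sym2.eq_iff] at hse
    rcases hse with ⟨hw, h2'⟩ | ⟨hw, h2'⟩
    · exact h2 e' hec hea hef h2'.symm
    · exact h1 e' hec h2'.symm
  rw [hstep]
  exact foldl_gstep_subset c a l₂ _ (Finset.mem_insert_self f F₁)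

lemma greedy_subset (c a : Finset (V × V)) (o : List (V × V)) :
    greedyForest c a o ⊆ c := by
  intro x hx
  rw [greedyForest_eq] at hx
  rcases mem_foldl_gstep c a o ∅ x hx with h | h
  · simp at h
  · exact h.1

end Greedy

lemma bernoulli_marg {ι : Type*} [DecidableEq ι] (E K : Finset ι) (hK : K ⊆ E)
    (a b : ι → ℝ) (hab : ∀ e ∈ E, a e + b e = 1) :
    ∑ R ∈ E.powerset, ((∏ e ∈ R, a e) * ∏ e ∈ E \ R, b e) * (if K ⊆ R then 1 else 0)
      = ∏ e ∈ K, a e := by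
  have key : ∀ R ∈ E.powerset,
      ((∏ e ∈ R, a e) * ∏ e ∈ E \ R, b e) * (if K ⊆ R then 1 else 0)
        = (∏ e ∈ R, a e) * ∏ e ∈ E \ R, (if e ∈ K then 0 else b e) := by
    intro R hR
    by_cases h : K ⊆ R
    · rw [if_pos h, mul_one]
      congr 1
      refine Finset.prod_congr rfl fun e he => ?_
      rw [if_neg fun heK => (Finset.mem_sdiff.mp he).2 (h heK)]
    · rw [if_neg h, mul_zero]
      obtain ⟨k, hkK, hkR⟩ := Finset.not_subset.mp h
      have hk : k ∈ E \ R := Finset.mem_sdiff.mpr ⟨hK hkK, hkR⟩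
      rw [Finset.prod_eq_zero hk (by rw [if_pos hkK]), mul_zero]
  rw [Finset.sum_congr rfl key, ← Finset.prod_add]
  rw [← Finset.prod_sdiff hK]
  have h1 : ∏ e ∈ E \ K, (a e + if e ∈ K then 0 else b e) = 1 :=
    Finset.prod_eq_one fun e he => by
      rw [if_neg (Finset.mem_sdiff.mp he).2]; exact hab e (Finset.mem_sdiff.mp he).1
  have h2 : ∏ e ∈ K, (a e + if e ∈ K then 0 else b e) = ∏ e ∈ K, a e :=
    Finset.prod_congr rfl fun e he => by rw [if_pos he, add_zero]
  rw [h1, h2, one_mul]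

lemma cut_count {V : Type*} [Fintype V] [DecidableEq V] (u v : V) (huv : u ≠ v) :
    ∑ A ∈ (Finset.univ : Finset V).powerset, (if u ∈ A ∧ v ∉ A then (1:ℝ) else 0)
      = 2 ^ Fintype.card V / 4 := by
  have key : ∀ A ∈ (Finset.univ : Finset V).powerset,
      (if u ∈ A ∧ v ∉ A then (1:ℝ) else 0)
        = (∏ x ∈ A, (if x = v then (0:ℝ) else 1)) *
          ∏ x ∈ Finset.univ \ A, (if x = u then (0:ℝ) else 1) := by
    intro A _
    by_cases h : u ∈ A ∧ v ∉ A
    · rw [if_pos h]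
      rw [Finset.prod_eq_one fun x hx => if_neg (by rintro rfl; exact h.2 hx),
        Finset.prod_eq_one fun x hx => if_neg (by rintro rfl; exact (Finset.mem_sdiff.mp hx).2 h.1),
        one_mul]
    · rw [if_neg h]
      symm
      rcases not_and_or.mp h with h' | h'
      · rw [Finset.prod_eq_zero (Finset.mem_sdiff.mpr ⟨Finset.mem_univ u, h'⟩) (if_pos rfl : (if u = u then (0:ℝ) else 1) = 0),
          mul_zero]
      · rw [Finset.prod_eq_zero (not_not.mp h') (if_pos rfl : (if v = v then (0:ℝ) else 1) = 0), zero_mul]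
  rw [Finset.sum_congr rfl key, ← Finset.prod_add]
  have hu : u ∈ (Finset.univ : Finset V) := Finset.mem_univ u
  have hv : v ∈ (Finset.univ : Finset V).erase u := Finset.mem_erase.mpr ⟨huv.symm, Finset.mem_univ v⟩
  rw [← Finset.mul_prod_erase _ _ hu, ← Finset.mul_prod_erase _ _ hv]
  have h1 : ((if u = v then (0:ℝ) else 1) + if u = u then 0 else 1) = 1 := by
    rw [if_neg huv, if_pos rfl, add_zero]
  have h2 : ((if v = v then (0:ℝ) else 1) + if v = u then 0 else 1) = 1 := by
    rw [if_pos rfl, if_neg huv.symm, zero_add]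
  have h3 : ∏ x ∈ ((Finset.univ : Finset V).erase u).erase v,
      ((if x = v then (0:ℝ) else 1) + if x = u then 0 else 1) = 2 ^ (Fintype.card V - 2) := by
    rw [Finset.prod_congr rfl (fun x hx => ?_), Finset.prod_const]
    · congr 1
      rw [Finset.card_erase_of_mem hv, Finset.card_erase_of_mem hu, Finset.card_univ]
      omega
    · rw [if_neg (Finset.mem_erase.mp hx).1,
        if_neg (Finset.mem_erase.mp (Finset.mem_erase.mp hx).2).1]
      norm_num
  rw [h1, h2, h3, one_mul, one_mul]
  have hn : 2 ≤ Fintype.card V := Fintype.one_lt_card_iff.mpr ⟨u, v, huv⟩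
  have : (2:ℝ) ^ (Fintype.card V - 2) * 2 ^ 2 = 2 ^ Fintype.card V := by
    rw [← pow_add, Nat.sub_add_cancel hn]
  norm_num at this ⊢
  linarith

lemma ind_nonneg (c : Prop) [Decidable c] : (0:ℝ) ≤ if c then 1 else 0 := by
  split <;> norm_num

lemma key_bound {V : Type*} [Fintype V] [DecidableEq V]
    (E : Finset (V × V)) (hE : ∀ e ∈ E, e.1 ≠ e.2)
    (p : V × V → ℝ) (hp0 : ∀ e, 0 ≤ p e)
    (hdir : ∀ v : V, ∑ e ∈ E.filter (fun e => e.2 = v), p e / 4 ≤ 1 / 2)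
    (order : List (V × V)) (hnodup : order.Nodup) (hmem : ∀ e, e ∈ order ↔ e ∈ E)
    (f : V × V) (hf : f ∈ E) :
    2 ^ Fintype.card V * (p f / 32) ≤
      ∑ A ∈ (Finset.univ : Finset V).powerset, ∑ R ∈ E.powerset,
        ((∏ e ∈ R, p e / 4) * ∏ e ∈ E \ R, (1 - p e / 4)) *
          (if f ∈ greedyForest (E.filter fun e => e.1 ∈ A ∧ e.2 ∉ A) R order then 1 else 0) := by
  have hne := hE f hf
  set n := Fintype.card V with hn
  set w : Finset (V × V) → ℝ :=
    fun R => (∏ e ∈ R, p e / 4) * ∏ e ∈ E \ R, (1 - p e / 4) with hwdef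
  have hb : ∀ e ∈ E, (0:ℝ) ≤ 1 - p e / 4 := by
    intro e he
    have h := hdir e.2
    have h1 : p e / 4 ≤ ∑ e' ∈ E.filter (fun e' => e'.2 = e.2), p e' / 4 :=
      Finset.single_le_sum (f := fun e' => p e' / 4)
        (fun i _ => div_nonneg (hp0 i) (by norm_num))
        (Finset.mem_filter.mpr ⟨he, rfl⟩)
    linarith
  have hw : ∀ R ∈ E.powerset, (0:ℝ) ≤ w R := by
    intro R hR
    refine mul_nonneg (Finset.prod_nonneg fun e _ => div_nonneg (hp0 e) (by norm_num))
      (Finset.prod_nonneg fun e he => hb e (Finset.mem_sdiff.mp he).1)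
  set D : Finset (V × V) := (E.erase f).filter (fun e' => e'.2 = f.2) with hDdef
  have hD : ∑ e' ∈ D, p e' / 4 ≤ 1 / 2 := by
    refine le_trans (Finset.sum_le_sum_of_subset_of_nonneg ?_
      (fun i _ _ => div_nonneg (hp0 i) (by norm_num))) (hdir f.2)
    intro e' he'
    rw [hDdef, Finset.mem_filter, Finset.mem_erase] at he'
    exact Finset.mem_filter.mpr ⟨he'.1.2, he'.2⟩
  have hD0 : (0:ℝ) ≤ ∑ e' ∈ D, p e' / 4 :=
    Finset.sum_nonneg fun i _ => div_nonneg (hp0 i) (by norm_num)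
  -- marginals
  have hab : ∀ e ∈ E, p e / 4 + (1 - p e / 4) = 1 := fun e _ => by ring
  have hm1 : ∑ R ∈ E.powerset, w R * (if ({f} : Finset (V × V)) ⊆ R then 1 else 0)
      = p f / 4 := by
    rw [bernoulli_marg E {f} (Finset.singleton_subset_iff.mpr hf) _ _ hab,
      Finset.prod_singleton]
  have hm2 : ∀ e' ∈ D, ∑ R ∈ E.powerset,
      w R * (if ({f, e'} : Finset (V × V)) ⊆ R then 1 else 0) = p f / 4 * (p e' / 4) := by
    intro e' he'
    rw [hDdef, Finset.mem_filter, Finset.mem_erase] at he'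
    have hfe' : f ≠ e' := fun h => he'.1.1 h.symm
    rw [bernoulli_marg E {f, e'} ?_ _ _ hab, Finset.prod_pair hfe']
    rw [Finset.insert_subset_iff, Finset.singleton_subset_iff]
    exact ⟨hf, he'.1.2⟩
  -- per-A bound
  have stepA : ∀ A ∈ (Finset.univ : Finset V).powerset,
      (if f.1 ∈ A ∧ f.2 ∉ A then (1:ℝ) else 0) * (p f / 4)
        - ∑ e' ∈ D, (if f.1 ∈ A ∧ f.2 ∉ A then (1:ℝ) else 0) *
            (if e'.1 ∈ A then (1:ℝ) else 0) * (p f / 4 * (p e' / 4))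
      ≤ ∑ R ∈ E.powerset, w R *
          (if f ∈ greedyForest (E.filter fun e => e.1 ∈ A ∧ e.2 ∉ A) R order then 1 else 0) := by
    intro A _
    have hx : (if f.1 ∈ A ∧ f.2 ∉ A then (1:ℝ) else 0) * (p f / 4)
        = ∑ R ∈ E.powerset, (if f.1 ∈ A ∧ f.2 ∉ A then (1:ℝ) else 0) *
            (w R * (if ({f} : Finset (V × V)) ⊆ R then 1 else 0)) := by
      rw [← Finset.mul_sum, hm1]
    have hy : ∑ e' ∈ D, (if f.1 ∈ A ∧ f.2 ∉ A then (1:ℝ) else 0) *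
            (if e'.1 ∈ A then (1:ℝ) else 0) * (p f / 4 * (p e' / 4))
        = ∑ R ∈ E.powerset, ∑ e' ∈ D, (if f.1 ∈ A ∧ f.2 ∉ A then (1:ℝ) else 0) *
            (if e'.1 ∈ A then (1:ℝ) else 0) *
            (w R * (if ({f, e'} : Finset (V × V)) ⊆ R then 1 else 0)) := by
      rw [Finset.sum_comm]
      refine Finset.sum_congr rfl fun e' he' => ?_
      rw [← Finset.mul_sum, hm2 e' he']
    rw [hx, hy, ← Finset.sum_sub_distrib]
    refine Finset.sum_le_sum fun R hR => ?_
    have hwR : (0:ℝ) ≤ w R := hw R hR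
    have hgn : (0:ℝ) ≤ w R *
        (if f ∈ greedyForest (E.filter fun e => e.1 ∈ A ∧ e.2 ∉ A) R order then 1 else 0) :=
      mul_nonneg hwR (ind_nonneg _)
    have hterm : ∀ e' ∈ D, (0:ℝ) ≤ (if f.1 ∈ A ∧ f.2 ∉ A then (1:ℝ) else 0) *
        (if e'.1 ∈ A then (1:ℝ) else 0) *
        (w R * (if ({f, e'} : Finset (V × V)) ⊆ R then 1 else 0)) :=
      fun e' _ => mul_nonneg (mul_nonneg (ind_nonneg _) (ind_nonneg _))
        (mul_nonneg hwR (ind_nonneg _))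
    have hsum0 : (0:ℝ) ≤ ∑ e' ∈ D, (if f.1 ∈ A ∧ f.2 ∉ A then (1:ℝ) else 0) *
        (if e'.1 ∈ A then (1:ℝ) else 0) *
        (w R * (if ({f, e'} : Finset (V × V)) ⊆ R then 1 else 0)) :=
      Finset.sum_nonneg hterm
    by_cases hc : f.1 ∈ A ∧ f.2 ∉ A
    · by_cases hfR : f ∈ R
      · by_cases hbad : ∃ e' ∈ D, e' ∈ R ∧ e'.1 ∈ A
        · obtain ⟨e₀, he₀D, he₀R, he₀A⟩ := hbad
          have h₀ : (if f.1 ∈ A ∧ f.2 ∉ A then (1:ℝ) else 0) *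
              (if e₀.1 ∈ A then (1:ℝ) else 0) *
              (w R * (if ({f, e₀} : Finset (V × V)) ⊆ R then 1 else 0)) = w R := by
            have hsub : ({f, e₀} : Finset (V × V)) ⊆ R := by
              rw [Finset.insert_subset_iff, Finset.singleton_subset_iff]
              exact ⟨hfR, he₀R⟩
            rw [if_pos hc, if_pos he₀A, if_pos hsub]
            ring
          have hsum : w R ≤ ∑ e' ∈ D, (if f.1 ∈ A ∧ f.2 ∉ A then (1:ℝ) else 0) *
              (if e'.1 ∈ A then (1:ℝ) else 0) *
              (w R * (if ({f, e'} : Finset (V × V)) ⊆ R then 1 else 0)) :=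
            le_trans (le_of_eq h₀.symm) (Finset.single_le_sum hterm he₀D)
          have hfirst : (if f.1 ∈ A ∧ f.2 ∉ A then (1:ℝ) else 0) *
              (w R * (if ({f} : Finset (V × V)) ⊆ R then 1 else 0)) = w R := by
            rw [if_pos hc, if_pos (Finset.singleton_subset_iff.mpr hfR)]; ring
          rw [hfirst]
          linarith
        · -- good case : f gets accepted
          have hg : f ∈ greedyForest (E.filter fun e => e.1 ∈ A ∧ e.2 ∉ A) R order := by
            refine mem_greedy _ _ order hnodup f hne ((hmem f).mpr hf)
              (Finset.mem_filter.mpr ⟨hf, hc⟩) hfR ?_ ?_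
            · intro e he
              have := (Finset.mem_filter.mp he).2
              intro h'
              exact hc.2 (h' ▸ this.1)
            · intro e he heR hef h22
              have heD : e ∈ D := by
                rw [hDdef, Finset.mem_filter, Finset.mem_erase]
                exact ⟨⟨hef, (Finset.mem_filter.mp he).1⟩, h22⟩
              exact hbad ⟨e, heD, heR, (Finset.mem_filter.mp he).2.1⟩
          have hfirst : (if f.1 ∈ A ∧ f.2 ∉ A then (1:ℝ) else 0) *
              (w R * (if ({f} : Finset (V × V)) ⊆ R then 1 else 0)) = w R := by
            rw [if_pos hc, if_pos (Finset.singleton_subset_iff.mpr hfR)]; ring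
          rw [hfirst, if_pos hg, mul_one]
          linarith
      · have hfirst : (if f.1 ∈ A ∧ f.2 ∉ A then (1:ℝ) else 0) *
            (w R * (if ({f} : Finset (V × V)) ⊆ R then 1 else 0)) = 0 := by
          rw [if_neg (fun h => hfR (Finset.singleton_subset_iff.mp h))]
          ring
        rw [hfirst]
        linarith
    · have hfirst : (if f.1 ∈ A ∧ f.2 ∉ A then (1:ℝ) else 0) *
          (w R * (if ({f} : Finset (V × V)) ⊆ R then 1 else 0)) = 0 := by
        rw [if_neg hc]; ring
      rw [hfirst]
      linarith
  -- sum over A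
  show 2 ^ n * (p f / 32) ≤
      ∑ A ∈ (Finset.univ : Finset V).powerset, ∑ R ∈ E.powerset,
        w R * (if f ∈ greedyForest (E.filter fun e => e.1 ∈ A ∧ e.2 ∉ A) R order then 1 else 0)
  refine le_trans ?_ (Finset.sum_le_sum stepA)
  rw [Finset.sum_sub_distrib, ← Finset.sum_mul, cut_count f.1 f.2 hne]
  have hswap : ∑ A ∈ (Finset.univ : Finset V).powerset, ∑ e' ∈ D,
      (if f.1 ∈ A ∧ f.2 ∉ A then (1:ℝ) else 0) * (if e'.1 ∈ A then (1:ℝ) else 0) *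
        (p f / 4 * (p e' / 4))
      = ∑ e' ∈ D, (∑ A ∈ (Finset.univ : Finset V).powerset,
          (if f.1 ∈ A ∧ f.2 ∉ A then (1:ℝ) else 0) * (if e'.1 ∈ A then (1:ℝ) else 0)) *
            (p f / 4 * (p e' / 4)) := by
    rw [Finset.sum_comm]
    exact Finset.sum_congr rfl fun e' _ => by rw [Finset.sum_mul]
  rw [hswap]
  have hAe : ∀ e' ∈ D, ∑ A ∈ (Finset.univ : Finset V).powerset,
      (if f.1 ∈ A ∧ f.2 ∉ A then (1:ℝ) else 0) * (if e'.1 ∈ A then (1:ℝ) else 0)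
        ≤ 2 ^ n / 4 := by
    intro e' _
    rw [← cut_count f.1 f.2 hne]
    refine Finset.sum_le_sum fun A _ => ?_
    split_ifs <;> norm_num
  have hbound : ∑ e' ∈ D, (∑ A ∈ (Finset.univ : Finset V).powerset,
      (if f.1 ∈ A ∧ f.2 ∉ A then (1:ℝ) else 0) * (if e'.1 ∈ A then (1:ℝ) else 0)) *
        (p f / 4 * (p e' / 4))
      ≤ (2 ^ n / 4) * (p f / 4) * ∑ e' ∈ D, p e' / 4 := by
    rw [Finset.mul_sum]
    refine Finset.sum_le_sum fun e' he' => ?_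
    have h1 : (0:ℝ) ≤ p f / 4 * (p e' / 4) := by
      have := hp0 f; have := hp0 e'; positivity
    calc (∑ A ∈ (Finset.univ : Finset V).powerset,
        (if f.1 ∈ A ∧ f.2 ∉ A then (1:ℝ) else 0) * (if e'.1 ∈ A then (1:ℝ) else 0)) *
          (p f / 4 * (p e' / 4))
        ≤ (2 ^ n / 4) * (p f / 4 * (p e' / 4)) :=
          mul_le_mul_of_nonneg_right (hAe e' he') h1
      _ = 2 ^ n / 4 * (p f / 4) * (p e' / 4) := by ring
  have hT : (0:ℝ) ≤ (2 ^ n / 4) * (p f / 4) := by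
    have := hp0 f; positivity
  have hfinal : (2 ^ n / 4) * (p f / 4) * (1/2) ≤
      (2 ^ n / 4) * (p f / 4) * (1 - ∑ e' ∈ D, p e' / 4) :=
    mul_le_mul_of_nonneg_left (by linarith) hT
  have heq : (2:ℝ) ^ n * (p f / 32) = (2 ^ n / 4) * (p f / 4) * (1/2) := by ring
  nlinarith [hbound, hfinal]

/-- Non-adaptive prophet inequality for graphic matroids, Bernoulli instance:
`p` lies in the graphic matroid polytope, the graph is directed so that every vertex has
fractional in-degree at most `1/2` under `p/4`, the considered set is the set of edges
crossing a uniformly random cut from `A` to `V ∖ A`, thresholds are `t e` on considered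
edges and `∞` elsewhere, and each edge is active (value `t e`, thinned to mass `p e / 4`)
independently.  Against the worst-case arrival order (increasing `t`), the algorithm's
expected value is at least `(1/32) ∑_e p e · t e`. -/
theorem stmt_13 {V : Type*} [Fintype V] [DecidableEq V]
    (E : Finset (V × V)) (hE : ∀ e ∈ E, e.1 ≠ e.2)
    (p t : V × V → ℝ) (hp0 : ∀ e, 0 ≤ p e) (ht : ∀ e, 0 ≤ t e)
    (hpoly : ∀ S ⊆ E, ∑ e ∈ S, p e ≤
      (Fintype.card V : ℝ) - Nat.card (dGraph S).ConnectedComponent)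
    (hdir : ∀ v : V, ∑ e ∈ E.filter (fun e => e.2 = v), p e / 4 ≤ 1 / 2)
    (order : List (V × V)) (hnodup : order.Nodup) (hmem : ∀ e, e ∈ order ↔ e ∈ E)
    (hsorted : order.Pairwise fun a b => t a ≤ t b) :
    (1 / 32) * ∑ e ∈ E, p e * t e ≤
      (∑ A ∈ (Finset.univ : Finset V).powerset,
        ∑ R ∈ E.powerset,
          ((∏ e ∈ R, p e / 4) * ∏ e ∈ E \ R, (1 - p e / 4)) *
            ∑ e ∈ greedyForest (E.filter fun e => e.1 ∈ A ∧ e.2 ∉ A) R order, t e)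
        / 2 ^ Fintype.card V := by
  rw [le_div_iff₀ (by positivity : (0:ℝ) < 2 ^ Fintype.card V)]
  -- rewrite the greedy value as a sum of indicators over E
  have hrw : ∀ A : Finset V, ∀ R ∈ E.powerset,
      ∑ e ∈ greedyForest (E.filter fun e => e.1 ∈ A ∧ e.2 ∉ A) R order, t e
        = ∑ f ∈ E, t f *
            (if f ∈ greedyForest (E.filter fun e => e.1 ∈ A ∧ e.2 ∉ A) R order then 1 else 0) := by
    intro A R _
    have hsub : greedyForest (E.filter fun e => e.1 ∈ A ∧ e.2 ∉ A) R order ⊆ E :=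
      (greedy_subset _ _ _).trans (Finset.filter_subset _ _)
    rw [eq_comm]
    calc ∑ f ∈ E, t f *
          (if f ∈ greedyForest (E.filter fun e => e.1 ∈ A ∧ e.2 ∉ A) R order then 1 else 0)
        = ∑ f ∈ E, (if f ∈ greedyForest (E.filter fun e => e.1 ∈ A ∧ e.2 ∉ A) R order
            then t f else 0) := Finset.sum_congr rfl fun f _ => by split_ifs <;> ring
      _ = ∑ f ∈ E ∩ greedyForest (E.filter fun e => e.1 ∈ A ∧ e.2 ∉ A) R order, t f :=
          Finset.sum_ite_mem _ _ _
      _ = ∑ f ∈ greedyForest (E.filter fun e => e.1 ∈ A ∧ e.2 ∉ A) R order, t f := by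
          rw [Finset.inter_eq_right.mpr hsub]
  have hnum : (∑ A ∈ (Finset.univ : Finset V).powerset,
        ∑ R ∈ E.powerset,
          ((∏ e ∈ R, p e / 4) * ∏ e ∈ E \ R, (1 - p e / 4)) *
            ∑ e ∈ greedyForest (E.filter fun e => e.1 ∈ A ∧ e.2 ∉ A) R order, t e)
      = ∑ f ∈ E, t f * ∑ A ∈ (Finset.univ : Finset V).powerset, ∑ R ∈ E.powerset,
          ((∏ e ∈ R, p e / 4) * ∏ e ∈ E \ R, (1 - p e / 4)) *
            (if f ∈ greedyForest (E.filter fun e => e.1 ∈ A ∧ e.2 ∉ A) R order then 1 else 0) := by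
    have step1 : ∀ A ∈ (Finset.univ : Finset V).powerset,
        ∑ R ∈ E.powerset,
          ((∏ e ∈ R, p e / 4) * ∏ e ∈ E \ R, (1 - p e / 4)) *
            ∑ e ∈ greedyForest (E.filter fun e => e.1 ∈ A ∧ e.2 ∉ A) R order, t e
        = ∑ f ∈ E, ∑ R ∈ E.powerset, t f *
            (((∏ e ∈ R, p e / 4) * ∏ e ∈ E \ R, (1 - p e / 4)) *
              (if f ∈ greedyForest (E.filter fun e => e.1 ∈ A ∧ e.2 ∉ A) R order then 1 else 0)) := by
      intro A _
      rw [Finset.sum_comm]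
      refine Finset.sum_congr rfl fun R hR => ?_
      rw [hrw A R hR, Finset.mul_sum]
      exact Finset.sum_congr rfl fun f _ => by ring
    rw [Finset.sum_congr rfl step1, Finset.sum_comm]
    refine Finset.sum_congr rfl fun f _ => ?_
    rw [Finset.mul_sum]
    exact Finset.sum_congr rfl fun A _ => by rw [Finset.mul_sum]
  rw [hnum]
  have hlhs : 1 / 32 * (∑ e ∈ E, p e * t e) * 2 ^ Fintype.card V
      = ∑ f ∈ E, t f * (2 ^ Fintype.card V * (p f / 32)) := by
    rw [Finset.mul_sum, Finset.sum_mul]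
    exact Finset.sum_congr rfl fun f _ => by ring
  rw [hlhs]
  refine Finset.sum_le_sum fun f hf => ?_
  exact mul_le_mul_of_nonneg_left
    (key_bound E hE p hp0 hdir order hnodup hmem f hf) (ht f)
end

section
/- Let elements of a matroid arrive in some order, each independently active with probability q_i and having value t_i, and suppose a greedy algorithm accepts each active element that is independent of the previously accepted set. If for each element i the probability (over activations of the other elements) that i is spanned by the set of active elements preceding it is at most b_i, then the expected value obtained by the greedy algorithm is at least ∑_i q_i t_i (1 − b_i). -/
open scoped Classical

/-- Rank of a set in the matroid given by the independence predicate `Ind`. -/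
noncomputable def mrank {N : Type*} [DecidableEq N] (Ind : Finset N → Prop)
    (S : Finset N) : ℕ :=
  (S.powerset.filter Ind).sup Finset.card

/-- Element `i` is spanned by `S` in the matroid `Ind`. -/
def mspanned {N : Type*} [DecidableEq N] (Ind : Finset N → Prop) (i : N) (S : Finset N) :
    Prop :=
  mrank Ind (insert i S) = mrank Ind S

/-- The greedy algorithm over arrival order `order`: accept each active element that is not
spanned by the previously accepted set. -/
noncomputable def greedyMatroid {N : Type*} [DecidableEq N]
    (Ind : Finset N → Prop) (active : N → Prop) (order : List N) : Finset N :=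
  order.foldl (fun A i => if active i ∧ ¬ mspanned Ind i A then insert i A else A) ∅

section M
variable {N : Type*} [DecidableEq N] {Ind : Finset N → Prop}

lemma mrank_le_card (Ind : Finset N → Prop) (S : Finset N) : mrank Ind S ≤ S.card := by
  refine Finset.sup_le fun J hJ => ?_
  rw [Finset.mem_filter, Finset.mem_powerset] at hJ
  exact Finset.card_le_card hJ.1

lemma mrank_mono (Ind : Finset N → Prop) {S T : Finset N} (h : S ⊆ T) :
    mrank Ind S ≤ mrank Ind T :=
  Finset.sup_mono (Finset.filter_subset_filter _ (Finset.powerset_mono.2 h))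

lemma card_le_mrank {J S : Finset N} (hJS : J ⊆ S) (hJ : Ind J) : J.card ≤ mrank Ind S :=
  Finset.le_sup (Finset.mem_filter.2 ⟨Finset.mem_powerset.2 hJS, hJ⟩)

lemma exists_mrank (hempty : Ind ∅) (S : Finset N) :
    ∃ J, J ⊆ S ∧ Ind J ∧ J.card = mrank Ind S := by
  obtain ⟨J, hJ, hcard⟩ := Finset.exists_mem_eq_sup (S.powerset.filter Ind)
    ⟨∅, Finset.mem_filter.2 ⟨Finset.empty_mem_powerset S, hempty⟩⟩ Finset.card
  rw [Finset.mem_filter, Finset.mem_powerset] at hJ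
  exact ⟨J, hJ.1, hJ.2, hcard.symm⟩

lemma mrank_insert_le (hdown : ∀ I J : Finset N, I ⊆ J → Ind J → Ind I)
    (hempty : Ind ∅) (x : N) (S : Finset N) :
    mrank Ind (insert x S) ≤ mrank Ind S + 1 := by
  obtain ⟨J, hJS, hJ, hcard⟩ := exists_mrank hempty (insert x S)
  have h1 : J.erase x ⊆ S := by
    intro y hy
    rcases Finset.mem_insert.1 (hJS (Finset.mem_of_mem_erase hy)) with h | h
    · exact absurd h (Finset.ne_of_mem_erase hy)
    · exact h
  have h2 : (J.erase x).card ≤ mrank Ind S :=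
    card_le_mrank h1 (hdown _ _ (Finset.erase_subset _ _) hJ)
  have h3 : J.card ≤ (J.erase x).card + 1 := by
    by_cases hx : x ∈ J
    · rw [Finset.card_erase_of_mem hx]; omega
    · rw [Finset.erase_eq_of_notMem hx]; omega
  omega

lemma mrank_eq_card_of_ind {S : Finset N} (hS : Ind S) : mrank Ind S = S.card :=
  le_antisymm (mrank_le_card _ _) (card_le_mrank (subset_refl S) hS)

variable (hempty : Ind ∅)
  (hdown : ∀ I J : Finset N, I ⊆ J → Ind J → Ind I)
  (hexch : ∀ I J : Finset N, Ind I → Ind J → I.card < J.card → ∃ x ∈ J \ I, Ind (insert x I))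

include hempty hdown hexch

lemma spanned_superset {A F : Finset N} {x : N}
    (hAF : A ⊆ F) (hA : Ind A) (hcard : A.card = mrank Ind F)
    (hsp : mspanned Ind x A) : mspanned Ind x F := by
  have hrA : mrank Ind A = A.card := mrank_eq_card_of_ind hA
  refine le_antisymm ?_ (mrank_mono _ (Finset.subset_insert _ _))
  by_contra h
  push_neg at h
  obtain ⟨J, hJsub, hJ, hJcard⟩ := exists_mrank hempty (insert x F)
  have hJA : A.card < J.card := by omega
  obtain ⟨y, hy, hind⟩ := hexch A J hA hJ hJA
  rw [Finset.mem_sdiff] at hy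
  rcases Finset.mem_insert.1 (hJsub hy.1) with rfl | hyF
  · have h1 : (insert y A).card ≤ mrank Ind (insert y A) :=
      card_le_mrank (subset_refl _) hind
    rw [Finset.card_insert_of_notMem hy.2, hsp, hrA] at h1
    omega
  · have h1 : (insert y A).card ≤ mrank Ind F :=
      card_le_mrank (Finset.insert_subset hyF hAF) hind
    rw [Finset.card_insert_of_notMem hy.2] at h1
    omega

lemma greedy_accept {A F : Finset N} {x : N}
    (hAF : A ⊆ F) (hA : Ind A) (hcard : A.card = mrank Ind F)
    (hnsp : ¬ mspanned Ind x A) :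
    Ind (insert x A) ∧ insert x A ⊆ insert x F ∧
      (insert x A).card = mrank Ind (insert x F) := by
  have hrA : mrank Ind A = A.card := mrank_eq_card_of_ind hA
  have hxA : x ∉ A := fun h => hnsp (by rw [mspanned, Finset.insert_eq_self.2 h])
  have h1 : mrank Ind (insert x A) ≤ mrank Ind A + 1 := mrank_insert_le hdown hempty x A
  have h2 : mrank Ind A ≤ mrank Ind (insert x A) := mrank_mono _ (Finset.subset_insert _ _)
  have h3 : mrank Ind (insert x A) = A.card + 1 := by
    rw [mspanned] at hnsp; omega
  obtain ⟨J, hJsub, hJ, hJcard⟩ := exists_mrank hempty (insert x A)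
  obtain ⟨y, hy, hind⟩ := hexch A J hA hJ (by omega)
  rw [Finset.mem_sdiff] at hy
  have hyx : y = x := by
    rcases Finset.mem_insert.1 (hJsub hy.1) with h | h
    · exact h
    · exact absurd h hy.2
  subst hyx
  have hsub : insert y A ⊆ insert y F := Finset.insert_subset_insert _ hAF
  refine ⟨hind, hsub, le_antisymm (card_le_mrank hsub hind) ?_⟩
  have h4 : mrank Ind (insert y F) ≤ mrank Ind F + 1 := mrank_insert_le hdown hempty y F
  rw [Finset.card_insert_of_notMem hy.2]
  omega

lemma greedy_inv (act : N → Prop) (l : List N) :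
    Ind (greedyMatroid Ind act l) ∧
      greedyMatroid Ind act l ⊆ l.toFinset.filter act ∧
      (greedyMatroid Ind act l).card = mrank Ind (l.toFinset.filter act) := by
  induction l using List.reverseRecOn with
  | nil =>
    have h0 : mrank Ind (∅ : Finset N) = 0 :=
      Nat.le_antisymm (by simpa using mrank_le_card Ind (∅ : Finset N)) (Nat.zero_le _)
    simp [greedyMatroid, h0]
    exact hempty
  | append_singleton l x ih =>
    obtain ⟨hI, hS, hC⟩ := ih
    have hfold : greedyMatroid Ind act (l ++ [x]) =
        if act x ∧ ¬ mspanned Ind x (greedyMatroid Ind act l) then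
          insert x (greedyMatroid Ind act l) else greedyMatroid Ind act l := by
      rw [greedyMatroid, greedyMatroid, List.foldl_append]; rfl
    have htf : (l ++ [x]).toFinset.filter act =
        if act x then insert x (l.toFinset.filter act) else l.toFinset.filter act := by
      by_cases hax : act x <;>
        · ext y
          simp only [List.toFinset_append, List.toFinset_cons, List.toFinset_nil,
            Finset.filter_union, Finset.mem_union, Finset.mem_filter, Finset.mem_insert,
            if_pos, if_neg, hax, Finset.mem_singleton, LawfulSingleton.insert_empty_eq]
          by_cases hy : y = x <;> simp [hy, hax] <;> tauto
    by_cases hax : act x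
    · rw [htf, if_pos hax]
      by_cases hsp : mspanned Ind x (greedyMatroid Ind act l)
      · rw [hfold, if_neg (by tauto)]
        refine ⟨hI, hS.trans (Finset.subset_insert _ _), ?_⟩
        rw [show mrank Ind (insert x (l.toFinset.filter act)) = mrank Ind (l.toFinset.filter act)
          from spanned_superset hempty hdown hexch hS hI hC hsp]
        exact hC
      · rw [hfold, if_pos ⟨hax, hsp⟩]
        exact greedy_accept hempty hdown hexch hS hI hC hsp
    · rw [htf, if_neg hax, hfold, if_neg (by tauto)]
      exact ⟨hI, hS, hC⟩

lemma subset_greedy_fold (act : N → Prop) (l : List N) (A : Finset N) :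
    A ⊆ l.foldl (fun A i => if act i ∧ ¬ mspanned Ind i A then insert i A else A) A := by
  clear hempty hdown hexch
  induction l generalizing A with
  | nil => exact subset_refl _
  | cons y l ih =>
    simp only [List.foldl_cons]
    refine subset_trans ?_ (ih _)
    by_cases h : act y ∧ ¬ mspanned Ind y A
    · rw [if_pos h]; exact Finset.subset_insert _ _
    · rw [if_neg h]

lemma mem_greedy_s19 (act : N → Prop) (order : List N) (i : N) (hi : i ∈ order)
    (hact : act i)
    (hnsp : ¬ mspanned Ind i (((order.takeWhile (· ≠ i)).toFinset).filter act)) :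
    i ∈ greedyMatroid Ind act order := by
  set p : N → Bool := (fun x => x ≠ i) with hp
  have hd : order.dropWhile p ≠ [] := by
    intro h
    have := List.takeWhile_append_dropWhile (p := p) (l := order)
    rw [h, List.append_nil] at this
    have hmem : i ∈ order.takeWhile p := by rw [this]; exact hi
    have := List.mem_takeWhile_imp hmem
    simp [hp] at this
  have hhead : (order.dropWhile p).head hd = i := by
    have := List.head_dropWhile_not p hd
    simpa [hp] using this
  have hsplit : order = order.takeWhile p ++ i :: (order.dropWhile p).tail := by
    conv_lhs => rw [← List.takeWhile_append_dropWhile (p := p) (l := order)]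
    rw [← hhead, List.cons_head_tail]
  obtain ⟨hI, hS, hC⟩ := greedy_inv hempty hdown hexch act (order.takeWhile p)
  have hnspG : ¬ mspanned Ind i (greedyMatroid Ind act (order.takeWhile p)) := fun h =>
    hnsp (spanned_superset hempty hdown hexch hS hI hC h)
  rw [hsplit]
  unfold greedyMatroid
  rw [List.foldl_append, List.foldl_cons]
  rw [show (order.takeWhile p).foldl
      (fun A i => if act i ∧ ¬ mspanned Ind i A then insert i A else A) ∅
      = greedyMatroid Ind act (order.takeWhile p) from rfl]
  rw [if_pos ⟨hact, hnspG⟩]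
  exact subset_greedy_fold hempty hdown hexch act _ _ (Finset.mem_insert_self _ _)

end M

lemma marginal {N : Type*} [DecidableEq N] (q : N → ℝ) (g : Finset N → ℝ) (L : Finset N) :
    ∀ D : Finset N, Disjoint L D →
      ∑ R ∈ (L ∪ D).powerset, ((∏ j ∈ R, q j) * ∏ j ∈ (L ∪ D) \ R, (1 - q j)) * g (L ∩ R)
      = ∑ R ∈ L.powerset, ((∏ j ∈ R, q j) * ∏ j ∈ L \ R, (1 - q j)) * g R := by
  intro D
  induction D using Finset.induction_on with
  | empty =>
    intro _
    rw [Finset.union_empty]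
    refine Finset.sum_congr rfl fun R hR => ?_
    rw [Finset.inter_eq_right.2 (Finset.mem_powerset.1 hR)]
  | @insert x D hxD ih =>
    intro hdisj
    have hxL : x ∉ L := fun h => (Finset.disjoint_left.1 hdisj h) (Finset.mem_insert_self _ _)
    have hdisj' : Disjoint L D := hdisj.mono_right (Finset.subset_insert _ _)
    have hxLD : x ∉ L ∪ D := by simp [hxL, hxD]
    rw [show L ∪ insert x D = insert x (L ∪ D) from Finset.union_insert .., ← ih hdisj',
      Finset.sum_powerset_insert hxLD, ← Finset.sum_add_distrib]
    refine Finset.sum_congr rfl fun R hR => ?_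
    have hRsub : R ⊆ L ∪ D := Finset.mem_powerset.1 hR
    have hxR : x ∉ R := fun h => hxLD (hRsub h)
    have hxSR : x ∉ (L ∪ D) \ R := fun h => hxLD (Finset.mem_sdiff.1 h).1
    have e1 : insert x (L ∪ D) \ R = insert x ((L ∪ D) \ R) :=
      Finset.insert_sdiff_of_notMem _ hxR
    have e2 : insert x (L ∪ D) \ insert x R = (L ∪ D) \ R := by
      rw [Finset.insert_sdiff_insert, Finset.sdiff_insert_of_notMem hxLD]
    have e3 : L ∩ insert x R = L ∩ R := Finset.inter_insert_of_notMem hxL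
    rw [e1, e2, e3, Finset.prod_insert hxR, Finset.prod_insert hxSR]
    ring


/-- Greedy lower bound: elements arrive in order `order`, each independently active with
probability `q i` and worth `t i ≥ 0`; greedy accepts each active unspanned element.
If for each `i` the probability that `i` is spanned by the active elements preceding it is
at most `b i`, then the expected value of greedy is at least `∑_i q i t i (1 - b i)`. -/
theorem stmt_19 {N : Type*} [Fintype N] [DecidableEq N]
    (Ind : Finset N → Prop) (hempty : Ind ∅)
    (hdown : ∀ I J : Finset N, I ⊆ J → Ind J → Ind I)
    (hexch : ∀ I J : Finset N, Ind I → Ind J → I.card < J.card →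
      ∃ x ∈ J \ I, Ind (insert x I))
    (q : N → ℝ) (hq0 : ∀ i, 0 ≤ q i) (hq1 : ∀ i, q i ≤ 1)
    (t : N → ℝ) (ht : ∀ i, 0 ≤ t i)
    (order : List N) (hnodup : order.Nodup) (hfull : ∀ i : N, i ∈ order)
    (b : N → ℝ)
    (hb : ∀ i : N,
      ∑ R ∈ ((order.takeWhile (· ≠ i)).toFinset).powerset,
        (if mspanned Ind i R then
          (∏ j ∈ R, q j) * ∏ j ∈ (order.takeWhile (· ≠ i)).toFinset \ R, (1 - q j)
        else 0) ≤ b i) :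
    ∑ i, q i * t i * (1 - b i) ≤
      ∑ R ∈ (Finset.univ : Finset N).powerset,
        ((∏ j ∈ R, q j) * ∏ j ∈ (Finset.univ : Finset N) \ R, (1 - q j)) *
          ∑ i ∈ greedyMatroid Ind (fun i => i ∈ R) order, t i := by
  have hw0 : ∀ R : Finset N,
      0 ≤ (∏ j ∈ R, q j) * ∏ j ∈ (Finset.univ : Finset N) \ R, (1 - q j) :=
    fun R => mul_nonneg (Finset.prod_nonneg fun j _ => hq0 j)
      (Finset.prod_nonneg fun j _ => by linarith [hq1 j])
  have key : ∀ i : N, q i * t i * (1 - b i) ≤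
      ∑ R ∈ (Finset.univ : Finset N).powerset,
        ((∏ j ∈ R, q j) * ∏ j ∈ (Finset.univ : Finset N) \ R, (1 - q j)) *
          (if i ∈ R ∧ ¬ mspanned Ind i ((order.takeWhile (· ≠ i)).toFinset ∩ R)
            then t i else 0) := by
    intro i
    set L := (order.takeWhile (· ≠ i)).toFinset with hLdef
    have hiL : i ∉ L := by
      simp only [hLdef, List.mem_toFinset]
      intro h
      simpa using List.mem_takeWhile_imp h
    set E := (Finset.univ : Finset N).erase i with hEdef
    have hiE : i ∉ E := Finset.notMem_erase _ _
    have hLE : L ⊆ E := fun x hx =>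
      Finset.mem_erase.2 ⟨fun h => hiL (h ▸ hx), Finset.mem_univ _⟩
    have hUE : (Finset.univ : Finset N) = insert i E :=
      (Finset.insert_erase (Finset.mem_univ i)).symm
    have step1 : ∑ R ∈ (Finset.univ : Finset N).powerset,
        ((∏ j ∈ R, q j) * ∏ j ∈ (Finset.univ : Finset N) \ R, (1 - q j)) *
          (if i ∈ R ∧ ¬ mspanned Ind i (L ∩ R) then t i else 0)
        = q i * t i * ∑ R ∈ E.powerset,
            ((∏ j ∈ R, q j) * ∏ j ∈ E \ R, (1 - q j)) *
              (if mspanned Ind i (L ∩ R) then 0 else 1) := by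
      rw [hUE, Finset.sum_powerset_insert hiE]
      have z1 : ∑ R ∈ E.powerset, ((∏ j ∈ R, q j) * ∏ j ∈ insert i E \ R, (1 - q j)) *
          (if i ∈ R ∧ ¬ mspanned Ind i (L ∩ R) then t i else 0) = 0 := by
        refine Finset.sum_eq_zero fun R hR => ?_
        have hiR : i ∉ R := fun h => hiE (Finset.mem_powerset.1 hR h)
        rw [if_neg (by tauto), mul_zero]
      rw [z1, zero_add, Finset.mul_sum]
      refine Finset.sum_congr rfl fun R hR => ?_
      have hRE : R ⊆ E := Finset.mem_powerset.1 hR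
      have hiR : i ∉ R := fun h => hiE (hRE h)
      have e2 : insert i E \ insert i R = E \ R := by
        rw [Finset.insert_sdiff_insert, Finset.sdiff_insert_of_notMem hiE]
      have e3 : L ∩ insert i R = L ∩ R := Finset.inter_insert_of_notMem hiL
      rw [Finset.prod_insert hiR, e2, e3]
      by_cases hsp : mspanned Ind i (L ∩ R)
      · rw [if_neg (by tauto), if_pos hsp]; ring
      · rw [if_pos ⟨Finset.mem_insert_self _ _, hsp⟩, if_neg hsp]; ring
    have step2 : ∑ R ∈ E.powerset, ((∏ j ∈ R, q j) * ∏ j ∈ E \ R, (1 - q j)) *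
          (if mspanned Ind i (L ∩ R) then 0 else 1)
        = ∑ R ∈ L.powerset, ((∏ j ∈ R, q j) * ∏ j ∈ L \ R, (1 - q j)) *
            (if mspanned Ind i R then 0 else 1) := by
      conv_lhs => rw [show E = L ∪ (E \ L) from (Finset.union_sdiff_of_subset hLE).symm]
      exact marginal q (fun S => if mspanned Ind i S then 0 else 1) L (E \ L)
        Finset.disjoint_sdiff
    have hsum1 : ∑ R ∈ L.powerset, ((∏ j ∈ R, q j) * ∏ j ∈ L \ R, (1 - q j)) = 1 := by
      rw [← Finset.prod_add]; simp
    have step3 : ∑ R ∈ L.powerset, ((∏ j ∈ R, q j) * ∏ j ∈ L \ R, (1 - q j)) *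
          (if mspanned Ind i R then 0 else 1)
        = (∑ R ∈ L.powerset, ((∏ j ∈ R, q j) * ∏ j ∈ L \ R, (1 - q j)))
            - ∑ R ∈ L.powerset,
            (if mspanned Ind i R then (∏ j ∈ R, q j) * ∏ j ∈ L \ R, (1 - q j) else 0) := by
      rw [← Finset.sum_sub_distrib]
      refine Finset.sum_congr rfl fun R hR => ?_
      by_cases hsp : mspanned Ind i R <;> simp [hsp]
    rw [step1, step2, step3, hsum1]
    have hble := hb i
    rw [← hLdef] at hble
    have h01 : 0 ≤ q i * t i := mul_nonneg (hq0 i) (ht i)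
    exact mul_le_mul_of_nonneg_left (by linarith) h01
  calc ∑ i, q i * t i * (1 - b i)
      ≤ ∑ i, ∑ R ∈ (Finset.univ : Finset N).powerset,
          ((∏ j ∈ R, q j) * ∏ j ∈ (Finset.univ : Finset N) \ R, (1 - q j)) *
            (if i ∈ R ∧ ¬ mspanned Ind i ((order.takeWhile (· ≠ i)).toFinset ∩ R)
              then t i else 0) := Finset.sum_le_sum fun i _ => key i
    _ = ∑ R ∈ (Finset.univ : Finset N).powerset, ∑ i,
          ((∏ j ∈ R, q j) * ∏ j ∈ (Finset.univ : Finset N) \ R, (1 - q j)) *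
            (if i ∈ R ∧ ¬ mspanned Ind i ((order.takeWhile (· ≠ i)).toFinset ∩ R)
              then t i else 0) := Finset.sum_comm
    _ ≤ ∑ R ∈ (Finset.univ : Finset N).powerset,
          ((∏ j ∈ R, q j) * ∏ j ∈ (Finset.univ : Finset N) \ R, (1 - q j)) *
            ∑ i ∈ greedyMatroid Ind (fun i => i ∈ R) order, t i := by
        refine Finset.sum_le_sum fun R hR => ?_
        rw [← Finset.mul_sum]
        refine mul_le_mul_of_nonneg_left ?_ (hw0 R)
        have hY : ∑ i ∈ greedyMatroid Ind (fun i => i ∈ R) order, t i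
            = ∑ i : N, (if i ∈ greedyMatroid Ind (fun i => i ∈ R) order then t i else 0) := by
          rw [Finset.sum_ite_mem, Finset.univ_inter]
        rw [hY]
        refine Finset.sum_le_sum fun i _ => ?_
        by_cases hc : i ∈ R ∧ ¬ mspanned Ind i ((order.takeWhile (· ≠ i)).toFinset ∩ R)
        · have hmem : i ∈ greedyMatroid Ind (fun i => i ∈ R) order := by
            refine mem_greedy_s19 hempty hdown hexch _ order i (hfull i) hc.1 ?_
            have hfe : ∀ (S : Finset N) (inst : DecidablePred (fun j => j ∈ R)),
                @Finset.filter N (fun j => j ∈ R) inst S = S ∩ R := by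
              intro S inst; ext y; simp
            rw [hfe]
            exact hc.2
          rw [if_pos hc, if_pos hmem]
        · rw [if_neg hc]
          by_cases hm : i ∈ greedyMatroid Ind (fun i => i ∈ R) order
          · rw [if_pos hm]; exact ht i
          · rw [if_neg hm]
end
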